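/- arXiv:1212.2247 — 7 statements merged into one kernel-verified Lean document; each statement's English description precedes it below -/
import Mathlib

section
/- Let f: Ω → ℝ be a measurable function that is tempered with respect to σ. Then for every ε > 0 there exists a measurable function g: Ω → (0,∞) such that for ℙ-a.e. ω ∈ Ω and every n ∈ ℤ, |f(σⁿω)| ≤ g(ω) e^{ε|n|}. -/
open MeasureTheory Filter

/-- A function `f : Ω → ℝ` is *tempered* with respect to the invertible
transformation `σ` if for `ℙ`-a.e. `ω`, `(1/|n|) * log |f(σⁿ ω)| → 0` as `n → ±∞`. -/
def Tempered {Ω : Type*} [MeasurableSpace Ω] (ℙ : Measure Ω) (σ : Equiv.Perm Ω)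
    (f : Ω → ℝ) : Prop :=
  ∀ᵐ ω ∂ℙ, Tendsto (fun n : ℤ => (1 / |(n : ℝ)|) * Real.log |f ((σ ^ n) ω)|)
    cofinite (nhds 0)

/-- If `f` is measurable and tempered with respect to the invertible,
ergodic, measure-preserving transformation `σ`, then for every `ε > 0` there is a
measurable positive function `g` such that for a.e. `ω` and every `n : ℤ`,
`|f(σⁿ ω)| ≤ g ω * exp (ε |n|)`. -/
theorem stmt0 {Ω : Type*} [MeasurableSpace Ω] (ℙ : Measure Ω) [IsProbabilityMeasure ℙ]
    (σ : Equiv.Perm Ω) (hσ : Measurable (⇑σ)) (hσinv : Measurable (⇑σ.symm))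
    (herg : Ergodic (⇑σ) ℙ)
    (f : Ω → ℝ) (hf : Measurable f) (htemp : Tempered ℙ σ f) :
    ∀ ε : ℝ, 0 < ε → ∃ g : Ω → ℝ, Measurable g ∧ (∀ ω, 0 < g ω) ∧
      ∀ᵐ ω ∂ℙ, ∀ n : ℤ, |f ((σ ^ n) ω)| ≤ g ω * Real.exp (ε * |(n : ℝ)|) := by
  intro ε hε
  -- measurability of iterates
  have hpow : ∀ n : ℤ, Measurable ⇑(σ ^ n) := by
    intro n
    induction n using Int.induction_on with
    | zero => simpa using measurable_id
    | succ k ih =>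
        rw [zpow_add_one]
        simpa [Equiv.Perm.coe_mul] using ih.comp hσ
    | pred k ih =>
        rw [zpow_sub_one]
        have : ⇑(σ⁻¹) = ⇑σ.symm := rfl
        simpa [Equiv.Perm.coe_mul, this] using ih.comp hσinv
  set F : ℤ → Ω → ENNReal :=
    fun n ω => ENNReal.ofReal (|f ((σ ^ n) ω)| * Real.exp (-(ε * |(n : ℝ)|))) with hF
  set g : Ω → ℝ := fun ω => (⨆ n : ℤ, F n ω).toReal + 1 with hg
  have hFmeas : ∀ n : ℤ, Measurable (F n) := fun n =>
    ENNReal.measurable_ofReal.comp (((hf.comp (hpow n)).abs).mul_const _)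
  refine ⟨g, ((Measurable.iSup hFmeas).ennreal_toReal.add measurable_const), ?_, ?_⟩
  · intro ω
    have := ENNReal.toReal_nonneg (a := ⨆ n : ℤ, F n ω)
    simp only [hg]
    linarith
  · filter_upwards [htemp] with ω hω
    -- finiteness of the bad set
    have hfin : {n : ℤ | ¬ (1 / |(n : ℝ)|) * Real.log |f ((σ ^ n) ω)| < ε}.Finite := by
      have h1 : ∀ᶠ n : ℤ in cofinite,
          (1 / |(n : ℝ)|) * Real.log |f ((σ ^ n) ω)| < ε :=
        hω.eventually (Filter.Tendsto.eventually_lt_const hε tendsto_id)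
      exact h1
    set B : Set ℤ := insert 0 {n : ℤ | ¬ (1 / |(n : ℝ)|) * Real.log |f ((σ ^ n) ω)| < ε}
      with hB
    have hBfin : B.Finite := hfin.insert 0
    -- good n satisfy the exponential bound
    have hgood : ∀ n : ℤ, n ∉ B → |f ((σ ^ n) ω)| ≤ Real.exp (ε * |(n : ℝ)|) := by
      intro n hn
      have hn0 : n ≠ 0 := fun h => hn (h ▸ Set.mem_insert _ _)
      have hlt : (1 / |(n : ℝ)|) * Real.log |f ((σ ^ n) ω)| < ε := by
        by_contra h; exact hn (Set.mem_insert_of_mem _ h)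
      have habs : (0 : ℝ) < |(n : ℝ)| :=
        abs_pos.mpr (show ((n:ℝ)) ≠ 0 from Int.cast_ne_zero.mpr hn0)
      have hlog : Real.log |f ((σ ^ n) ω)| < ε * |(n : ℝ)| := by
        rw [one_div_mul_eq_div, div_lt_iff₀ habs] at hlt
        linarith [hlt]
      rcases eq_or_lt_of_le (abs_nonneg (f ((σ ^ n) ω))) with h0 | h0
      · rw [← h0]; positivity
      · calc |f ((σ ^ n) ω)| = Real.exp (Real.log |f ((σ ^ n) ω)|) :=
              (Real.exp_log h0).symm
          _ ≤ Real.exp (ε * |(n : ℝ)|) := Real.exp_le_exp.mpr hlog.le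
    -- a uniform bound on the terms
    set C : ℝ := 1 + ∑ m ∈ hBfin.toFinset, |f ((σ ^ m) ω)| with hC
    have hsum_nonneg : (0 : ℝ) ≤ ∑ m ∈ hBfin.toFinset, |f ((σ ^ m) ω)| :=
      Finset.sum_nonneg fun m _ => abs_nonneg _
    have hCbound : ∀ n : ℤ, |f ((σ ^ n) ω)| * Real.exp (-(ε * |(n : ℝ)|)) ≤ C := by
      intro n
      have hexple : Real.exp (-(ε * |(n : ℝ)|)) ≤ 1 := by
        apply Real.exp_le_one_iff.mpr
        have : (0 : ℝ) ≤ ε * |(n : ℝ)| := by positivity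
        linarith
      by_cases hn : n ∈ B
      · have h1 : |f ((σ ^ n) ω)| * Real.exp (-(ε * |(n : ℝ)|)) ≤ |f ((σ ^ n) ω)| :=
          mul_le_of_le_one_right (abs_nonneg _) hexple
        have h2 : |f ((σ ^ n) ω)| ≤ ∑ m ∈ hBfin.toFinset, |f ((σ ^ m) ω)| :=
          Finset.single_le_sum (f := fun m => |f ((σ ^ m) ω)|) (fun m _ => abs_nonneg _) (hBfin.mem_toFinset.mpr hn)
        simp only [hC]; linarith
      · have h1 : |f ((σ ^ n) ω)| * Real.exp (-(ε * |(n : ℝ)|)) ≤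
            Real.exp (ε * |(n : ℝ)|) * Real.exp (-(ε * |(n : ℝ)|)) :=
          mul_le_mul_of_nonneg_right (hgood n hn) (Real.exp_nonneg _)
        rw [← Real.exp_add] at h1
        simp only [add_neg_cancel, Real.exp_zero] at h1
        simp only [hC]; linarith
    have hStop : (⨆ n : ℤ, F n ω) ≤ ENNReal.ofReal C :=
      iSup_le fun n => ENNReal.ofReal_le_ofReal (hCbound n)
    have hSne : (⨆ n : ℤ, F n ω) ≠ ⊤ := ne_top_of_le_ne_top ENNReal.ofReal_ne_top hStop
    intro n
    have hterm_nonneg : (0 : ℝ) ≤ |f ((σ ^ n) ω)| * Real.exp (-(ε * |(n : ℝ)|)) := by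
      positivity
    have hle : |f ((σ ^ n) ω)| * Real.exp (-(ε * |(n : ℝ)|)) ≤
        (⨆ m : ℤ, F m ω).toReal := by
      have h1 : F n ω ≤ ⨆ m : ℤ, F m ω := le_iSup (fun m => F m ω) n
      have h2 := ENNReal.toReal_mono hSne h1
      rwa [hF, ENNReal.toReal_ofReal hterm_nonneg] at h2
    have hgω : |f ((σ ^ n) ω)| * Real.exp (-(ε * |(n : ℝ)|)) ≤ g ω := by
      simp only [hg]; linarith
    have := mul_le_mul_of_nonneg_right hgω (Real.exp_nonneg (ε * |(n : ℝ)|))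
    rwa [mul_assoc, ← Real.exp_add, neg_add_cancel, Real.exp_zero, mul_one] at this
end

section
/- Let ε > 0, let f: Ω → ℝ and g: Ω → (0,∞) be measurable, and suppose that for ℙ-a.e. ω ∈ Ω and every n ∈ ℤ, |f(σⁿω)| ≤ g(ω) e^{ε|n|}. Define g̃(ω) := inf_{m∈ℤ} g(σᵐω) e^{ε|m|}. Then g̃ is measurable, g̃ ≤ g, for ℙ-a.e. ω and every n ∈ ℤ one still has |f(σⁿω)| ≤ g̃(ω) e^{ε|n|}, and for every ω and every m ∈ ℤ, e^{−ε|m|} g̃(ω) ≤ g̃(σᵐω) ≤ e^{ε|m|} g̃(ω); consequently, for every ω with 0 < g̃(ω) < ∞, limsup_{n→±∞} (1/|n|) |log g̃(σⁿω)| ≤ ε. -/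
open MeasureTheory Filter

/-- Given `ε > 0` and a measurable positive `g` dominating `f` along
orbits, the function `g̃(ω) = inf_{m ∈ ℤ} g(σᵐ ω) e^{ε|m|}` is measurable, `g̃ ≤ g`,
it still dominates `f` along orbits a.e., it varies sub-exponentially along orbits, and
consequently its logarithm grows at rate at most `ε`. -/
theorem stmt1 {Ω : Type*} [MeasurableSpace Ω] (ℙ : Measure Ω) [IsProbabilityMeasure ℙ]
    (σ : Equiv.Perm Ω) (hσ : Measurable (⇑σ)) (hσinv : Measurable (⇑σ.symm))
    (herg : Ergodic (⇑σ) ℙ)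
    (ε : ℝ) (hε : 0 < ε)
    (f g : Ω → ℝ) (hf : Measurable f) (hg : Measurable g) (hgpos : ∀ ω, 0 < g ω)
    (hbd : ∀ᵐ ω ∂ℙ, ∀ n : ℤ, |f ((σ ^ n) ω)| ≤ g ω * Real.exp (ε * |(n : ℝ)|))
    (gt : Ω → ℝ)
    (hgt : gt = fun ω => ⨅ m : ℤ, g ((σ ^ m) ω) * Real.exp (ε * |(m : ℝ)|)) :
    Measurable gt ∧
    (∀ ω, gt ω ≤ g ω) ∧
    (∀ᵐ ω ∂ℙ, ∀ n : ℤ, |f ((σ ^ n) ω)| ≤ gt ω * Real.exp (ε * |(n : ℝ)|)) ∧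
    (∀ ω, ∀ m : ℤ, Real.exp (-(ε * |(m : ℝ)|)) * gt ω ≤ gt ((σ ^ m) ω) ∧
        gt ((σ ^ m) ω) ≤ Real.exp (ε * |(m : ℝ)|) * gt ω) ∧
    (∀ ω, 0 < gt ω →
      Filter.limsup (fun n : ℤ => (1 / |(n : ℝ)|) * |Real.log (gt ((σ ^ n) ω))|)
        cofinite ≤ ε) := by
  -- basic facts about powers of σ
  have key : ∀ (k m : ℤ) (ω : Ω), (σ ^ k) ((σ ^ m) ω) = (σ ^ (k + m)) ω := by
    intro k m ω; simp [zpow_add, Equiv.Perm.mul_apply]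
  have hmeas : ∀ m : ℤ, Measurable ⇑(σ ^ m) := by
    intro m
    induction m using Int.induction_on with
    | zero => simpa using measurable_id
    | succ k ih =>
        have : ⇑(σ ^ ((k : ℤ) + 1)) = ⇑(σ ^ (k : ℤ)) ∘ ⇑σ := by
          funext ω; simp [zpow_add, Equiv.Perm.mul_apply]
        rw [this]; exact ih.comp hσ
    | pred k ih =>
        have : ⇑(σ ^ (-(k : ℤ) - 1)) = ⇑(σ ^ (-(k : ℤ))) ∘ ⇑σ.symm := by
          funext ω; simp [sub_eq_add_neg, zpow_add, Equiv.Perm.mul_apply]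
        rw [this]; exact ih.comp hσinv
  -- measure preservation of all integer powers
  let E : Ω ≃ᵐ Ω := { toEquiv := σ, measurable_toFun := hσ, measurable_invFun := hσinv }
  have hE : MeasurePreserving (⇑E) ℙ ℙ := herg.toMeasurePreserving
  have hEsymm : MeasurePreserving (⇑σ.symm) ℙ ℙ := hE.symm E
  have hmp : ∀ m : ℤ, MeasurePreserving (⇑(σ ^ m)) ℙ ℙ := by
    intro m
    induction m using Int.induction_on with
    | zero => simpa using MeasurePreserving.id ℙ
    | succ k ih =>
        have : ⇑(σ ^ ((k : ℤ) + 1)) = ⇑(σ ^ (k : ℤ)) ∘ ⇑σ := by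
          funext ω; simp [zpow_add, Equiv.Perm.mul_apply]
        rw [this]; exact ih.comp herg.toMeasurePreserving
    | pred k ih =>
        have : ⇑(σ ^ (-(k : ℤ) - 1)) = ⇑(σ ^ (-(k : ℤ))) ∘ ⇑σ.symm := by
          funext ω; simp [sub_eq_add_neg, zpow_add, Equiv.Perm.mul_apply]
        rw [this]; exact ih.comp hEsymm
  -- positivity and boundedness below of the infimand
  have hterm_pos : ∀ (ω : Ω) (m : ℤ), 0 < g ((σ ^ m) ω) * Real.exp (ε * |(m : ℝ)|) :=
    fun ω m => mul_pos (hgpos _) (Real.exp_pos _)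
  have hbdd : ∀ ω : Ω, BddBelow (Set.range fun m : ℤ =>
      g ((σ ^ m) ω) * Real.exp (ε * |(m : ℝ)|)) := by
    intro ω
    exact ⟨0, by rintro x ⟨m, rfl⟩; exact (hterm_pos ω m).le⟩
  -- gt ≤ each term
  have hgt_le : ∀ (ω : Ω) (m : ℤ), gt ω ≤ g ((σ ^ m) ω) * Real.exp (ε * |(m : ℝ)|) := by
    intro ω m; rw [hgt]; exact ciInf_le (hbdd ω) m
  have hgt_nonneg : ∀ ω, 0 ≤ gt ω := by
    intro ω; rw [hgt]
    exact le_ciInf fun m => (hterm_pos ω m).le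
  -- part 1 : measurability
  have h1 : Measurable gt := by
    rw [hgt]
    exact Measurable.iInf fun m => (hg.comp (hmeas m)).mul measurable_const
  -- part 2 : gt ≤ g
  have h2 : ∀ ω, gt ω ≤ g ω := by
    intro ω
    have := hgt_le ω 0
    simpa using this
  -- part 4 : sub-exponential variation (first the lower bound)
  have hlow : ∀ (ω : Ω) (m : ℤ), Real.exp (-(ε * |(m : ℝ)|)) * gt ω ≤ gt ((σ ^ m) ω) := by
    intro ω m
    have hrw : gt ((σ ^ m) ω) = ⨅ k : ℤ, g ((σ ^ k) ((σ ^ m) ω)) * Real.exp (ε * |(k : ℝ)|) := by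
      rw [hgt]
    rw [hrw]
    refine le_ciInf fun k => ?_
    have h1' : gt ω ≤ g ((σ ^ (k + m)) ω) * Real.exp (ε * |((k + m : ℤ) : ℝ)|) :=
      hgt_le ω (k + m)
    have habs : |((k + m : ℤ) : ℝ)| ≤ |(k : ℝ)| + |(m : ℝ)| := by
      push_cast; exact abs_add_le _ _
    calc Real.exp (-(ε * |(m : ℝ)|)) * gt ω
        ≤ Real.exp (-(ε * |(m : ℝ)|)) *
            (g ((σ ^ (k + m)) ω) * Real.exp (ε * |((k + m : ℤ) : ℝ)|)) := by
          exact mul_le_mul_of_nonneg_left h1' (Real.exp_pos _).le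
      _ = g ((σ ^ (k + m)) ω) *
            (Real.exp (-(ε * |(m : ℝ)|)) * Real.exp (ε * |((k + m : ℤ) : ℝ)|)) := by ring
      _ = g ((σ ^ (k + m)) ω) * Real.exp (ε * |((k + m : ℤ) : ℝ)| - ε * |(m : ℝ)|) := by
          rw [← Real.exp_add]; ring_nf
      _ ≤ g ((σ ^ (k + m)) ω) * Real.exp (ε * |(k : ℝ)|) := by
          refine mul_le_mul_of_nonneg_left (Real.exp_le_exp.2 ?_) (hgpos _).le
          nlinarith [habs]
      _ = g ((σ ^ k) ((σ ^ m) ω)) * Real.exp (ε * |(k : ℝ)|) := by rw [key]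
  have h4 : ∀ (ω : Ω) (m : ℤ), Real.exp (-(ε * |(m : ℝ)|)) * gt ω ≤ gt ((σ ^ m) ω) ∧
      gt ((σ ^ m) ω) ≤ Real.exp (ε * |(m : ℝ)|) * gt ω := by
    intro ω m
    refine ⟨hlow ω m, ?_⟩
    have := hlow ((σ ^ m) ω) (-m)
    rw [key, neg_add_cancel] at this
    simp only [zpow_zero, Equiv.Perm.coe_one, id_eq] at this
    have habs : |((-m : ℤ) : ℝ)| = |(m : ℝ)| := by push_cast; exact abs_neg _
    rw [habs] at this
    calc gt ((σ ^ m) ω) = Real.exp (ε * |(m : ℝ)|) *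
          (Real.exp (-(ε * |(m : ℝ)|)) * gt ((σ ^ m) ω)) := by
          rw [← mul_assoc, ← Real.exp_add]; simp
      _ ≤ Real.exp (ε * |(m : ℝ)|) * gt ω :=
          mul_le_mul_of_nonneg_left this (Real.exp_pos _).le
  -- part 3 : a.e. domination by gt
  have h3 : ∀ᵐ ω ∂ℙ, ∀ n : ℤ, |f ((σ ^ n) ω)| ≤ gt ω * Real.exp (ε * |(n : ℝ)|) := by
    have horb : ∀ᵐ ω ∂ℙ, ∀ m : ℤ, ∀ n : ℤ,
        |f ((σ ^ n) ((σ ^ m) ω))| ≤ g ((σ ^ m) ω) * Real.exp (ε * |(n : ℝ)|) := by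
      rw [ae_all_iff]
      intro m
      exact (hmp m).quasiMeasurePreserving.ae hbd
    filter_upwards [horb] with ω hω n
    rw [← div_le_iff₀ (Real.exp_pos _)]
    have hrw : gt ω = ⨅ m : ℤ, g ((σ ^ m) ω) * Real.exp (ε * |(m : ℝ)|) := by rw [hgt]
    rw [hrw]
    refine le_ciInf fun m => ?_
    rw [div_le_iff₀ (Real.exp_pos _)]
    have h1' := hω m (n - m)
    rw [key, sub_add_cancel] at h1'
    have habs : |((n - m : ℤ) : ℝ)| ≤ |(n : ℝ)| + |(m : ℝ)| := by
      push_cast; exact abs_sub _ _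
    calc |f ((σ ^ n) ω)| ≤ g ((σ ^ m) ω) * Real.exp (ε * |((n - m : ℤ) : ℝ)|) := h1'
      _ ≤ g ((σ ^ m) ω) * Real.exp (ε * (|(n : ℝ)| + |(m : ℝ)|)) := by
          refine mul_le_mul_of_nonneg_left (Real.exp_le_exp.2 ?_) (hgpos _).le
          nlinarith [habs]
      _ = g ((σ ^ m) ω) * Real.exp (ε * |(m : ℝ)|) * Real.exp (ε * |(n : ℝ)|) := by
          rw [mul_assoc, ← Real.exp_add]; ring_nf
  -- part 5 : limsup bound
  have h5 : ∀ ω, 0 < gt ω →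
      Filter.limsup (fun n : ℤ => (1 / |(n : ℝ)|) * |Real.log (gt ((σ ^ n) ω))|)
        cofinite ≤ ε := by
    intro ω hω
    set u : ℤ → ℝ := fun n => (1 / |(n : ℝ)|) * |Real.log (gt ((σ ^ n) ω))| with hu
    have hu_nonneg : ∀ n, 0 ≤ u n := fun n =>
      mul_nonneg (by positivity) (abs_nonneg _)
    have hcob : IsCoboundedUnder (· ≤ ·) cofinite u :=
      isCoboundedUnder_le_of_le cofinite hu_nonneg
    -- pointwise log bound
    have hgtpos : ∀ n : ℤ, 0 < gt ((σ ^ n) ω) := fun n =>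
      lt_of_lt_of_le (mul_pos (Real.exp_pos _) hω) (h4 ω n).1
    have hlog : ∀ n : ℤ, |Real.log (gt ((σ ^ n) ω))| ≤ ε * |(n : ℝ)| + |Real.log (gt ω)| := by
      intro n
      rw [abs_le]
      constructor
      · have := Real.log_le_log (mul_pos (Real.exp_pos _) hω) (h4 ω n).1
        rw [Real.log_mul (Real.exp_ne_zero _) hω.ne', Real.log_exp] at this
        have : -(ε * |(n : ℝ)|) + Real.log (gt ω) ≤ Real.log (gt ((σ ^ n) ω)) := this
        nlinarith [neg_abs_le (Real.log (gt ω))]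
      · have := Real.log_le_log (hgtpos n) (h4 ω n).2
        rw [Real.log_mul (Real.exp_ne_zero _) hω.ne', Real.log_exp] at this
        nlinarith [le_abs_self (Real.log (gt ω))]
    refine le_of_forall_pos_le_add fun δ hδ => ?_
    refine limsup_le_of_le hcob ?_
    have hev : ∀ᶠ n : ℤ in cofinite, max 1 (|Real.log (gt ω)| / δ) ≤ |(n : ℝ)| := by
      have : {n : ℤ | |(n : ℝ)| < max 1 (|Real.log (gt ω)| / δ)}.Finite := by
        have hsub : {n : ℤ | |(n : ℝ)| < max 1 (|Real.log (gt ω)| / δ)} ⊆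
            {n : ℤ | |n| ≤ ⌈max 1 (|Real.log (gt ω)| / δ)⌉} := by
          intro n hn
          simp only [Set.mem_setOf_eq] at hn ⊢
          have : (|n| : ℝ) ≤ ⌈max 1 (|Real.log (gt ω)| / δ)⌉ := by
            push_cast
            exact le_trans hn.le (Int.le_ceil _)
          exact_mod_cast this
        refine Set.Finite.subset ?_ hsub
        have : {n : ℤ | |n| ≤ ⌈max 1 (|Real.log (gt ω)| / δ)⌉} ⊆
            Set.Icc (-⌈max 1 (|Real.log (gt ω)| / δ)⌉) ⌈max 1 (|Real.log (gt ω)| / δ)⌉ := by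
          intro n hn
          simp only [Set.mem_setOf_eq] at hn
          exact ⟨neg_le_of_abs_le hn, le_of_abs_le hn⟩
        exact (Set.finite_Icc _ _).subset this
      exact eventually_cofinite.2 (this.subset fun n hn => not_le.1 hn)
    filter_upwards [hev] with n hn
    have hn1 : (1 : ℝ) ≤ |(n : ℝ)| := le_trans (le_max_left _ _) hn
    have hnpos : (0 : ℝ) < |(n : ℝ)| := lt_of_lt_of_le one_pos hn1
    have hn2 : |Real.log (gt ω)| / δ ≤ |(n : ℝ)| := le_trans (le_max_right _ _) hn
    have hlogn : |Real.log (gt ω)| ≤ δ * |(n : ℝ)| := by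
      rw [div_le_iff₀ hδ] at hn2; linarith
    have : u n ≤ (1 / |(n : ℝ)|) * (ε * |(n : ℝ)| + |Real.log (gt ω)|) :=
      mul_le_mul_of_nonneg_left (hlog n) (by positivity)
    calc u n ≤ (1 / |(n : ℝ)|) * (ε * |(n : ℝ)| + |Real.log (gt ω)|) := this
      _ ≤ (1 / |(n : ℝ)|) * (ε * |(n : ℝ)| + δ * |(n : ℝ)|) :=
          mul_le_mul_of_nonneg_left (by linarith) (by positivity)
      _ = ε + δ := by field_simp
  exact ⟨h1, h2, h3, h4, h5⟩
end

section
/- Let σ be an invertible, ergodic, measure-preserving transformation of a probability space (Ω, 𝓕, ℙ), let α: Ω → (0,∞) be measurable with log α ∈ L¹(ℙ), let κ := ∫ log α dℙ, and let ε > 0. Then there exists a measurable function A: Ω → (0,∞), tempered with respect to σ, such that for ℙ-a.e. ω and every integer l ≥ 0, ∏_{i=1}^{l} α(σ^{−i}ω) ≤ A(ω) e^{(κ+ε) l}. -/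
open MeasureTheory Filter

section Aux

variable {Ω : Type*} [MeasurableSpace Ω] {ℙ : Measure Ω} [IsProbabilityMeasure ℙ]
variable {T : Ω → Ω} {g : Ω → ℝ}

/-- The running maximum of Birkhoff sums. -/
noncomputable def maxS (T : Ω → Ω) (g : Ω → ℝ) : ℕ → Ω → ℝ
  | 0 => fun _ => 0
  | n + 1 => fun x => max (maxS T g n x) (birkhoffSum T g (n + 1) x)

lemma maxS_mono (n : ℕ) (x : Ω) : maxS T g n x ≤ maxS T g (n + 1) x :=
  le_max_left _ _

lemma maxS_nonneg (n : ℕ) (x : Ω) : 0 ≤ maxS T g n x := by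
  induction n with
  | zero => simp [maxS]
  | succ n ih => exact ih.trans (maxS_mono n x)

lemma birkhoffSum_le_maxS {k n : ℕ} (h : k ≤ n) (x : Ω) :
    birkhoffSum T g k x ≤ maxS T g n x := by
  induction n with
  | zero =>
    rcases Nat.le_zero.mp h with rfl
    simp [maxS, birkhoffSum]
  | succ n ih =>
    rcases Nat.le_succ_iff.mp h with h' | h'
    · exact (ih h').trans (maxS_mono n x)
    · subst h'; exact le_max_right _ _

lemma maxS_key (n : ℕ) (x : Ω) :
    maxS T g n x ≤ max 0 (g x + maxS T g n (T x)) := by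
  induction n with
  | zero => simp [maxS]
  | succ n ih =>
    refine max_le ?_ ?_
    · exact ih.trans (max_le_max le_rfl (by linarith [maxS_mono (T := T) (g := g) n (T x)]))
    · rw [birkhoffSum_succ']
      have h := birkhoffSum_le_maxS (T := T) (g := g) (Nat.le_succ n) (T x)
      exact le_trans (by linarith) (le_max_right _ _)

lemma maxS_measurable (hT : Measurable T) (hg : Measurable g) (n : ℕ) :
    Measurable (maxS T g n) := by
  induction n with
  | zero => simpa [maxS] using measurable_const
  | succ n ih =>
    exact ih.max (Finset.measurable_sum _ fun i _ => hg.comp (hT.iterate i))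

lemma birkhoffSum_integrable (hT : MeasurePreserving T ℙ ℙ) (hg : Integrable g ℙ) (n : ℕ) :
    Integrable (birkhoffSum T g n) ℙ := by
  have : (birkhoffSum T g n) = fun x => ∑ i ∈ Finset.range n, (g ∘ T^[i]) x := rfl
  rw [this]
  exact integrable_finset_sum _ fun i _ =>
    ((hT.iterate i).integrable_comp hg.aestronglyMeasurable).mpr hg

lemma maxS_integrable (hT : MeasurePreserving T ℙ ℙ) (hg : Integrable g ℙ) (n : ℕ) :
    Integrable (maxS T g n) ℙ := by
  induction n with
  | zero => simpa [maxS] using integrable_const (0 : ℝ)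
  | succ n ih => exact ih.sup (birkhoffSum_integrable hT hg (n + 1))

lemma integral_comp_mp (hT : MeasurePreserving T ℙ ℙ) {f : Ω → ℝ}
    (hf : AEStronglyMeasurable f ℙ) : ∫ x, f (T x) ∂ℙ = ∫ x, f x ∂ℙ := by
  rw [← MeasureTheory.integral_map hT.aemeasurable (hT.map_eq.symm ▸ hf), hT.map_eq]

/-- Hopf's maximal ergodic lemma. -/
lemma hopf_maximal (hT : MeasurePreserving T ℙ ℙ) (hTm : Measurable T)
    (hg : Integrable g ℙ) (hgm : Measurable g) (n : ℕ) :
    0 ≤ ∫ x, Set.indicator {y | 0 < maxS T g n y} g x ∂ℙ := by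
  set P := {y | 0 < maxS T g n y} with hPdef
  have hP : MeasurableSet P := measurableSet_lt measurable_const (maxS_measurable hTm hgm n)
  have hMint : Integrable (maxS T g n) ℙ := maxS_integrable hT hg n
  have hMTint : Integrable (fun x => maxS T g n (T x)) ℙ :=
    (hT.integrable_comp hMint.aestronglyMeasurable).mpr hMint
  have pt : ∀ x, maxS T g n x - maxS T g n (T x) ≤ Set.indicator P g x := by
    intro x
    by_cases hx : x ∈ P
    · rw [Set.indicator_of_mem hx]
      have hkey := maxS_key (T := T) (g := g) n x
      rcases le_max_iff.mp hkey with h | h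
      · exact absurd (lt_of_lt_of_le hx h) (lt_irrefl _)
      · linarith
    · rw [Set.indicator_of_notMem hx]
      have h0 : maxS T g n x = 0 :=
        le_antisymm (not_lt.mp hx) (maxS_nonneg n x)
      rw [h0]
      linarith [maxS_nonneg (T := T) (g := g) n (T x)]
  have hint : ∫ x, (maxS T g n x - maxS T g n (T x)) ∂ℙ = 0 := by
    rw [integral_sub hMint hMTint,
      integral_comp_mp hT hMint.aestronglyMeasurable, sub_self]
  calc (0 : ℝ) = ∫ x, (maxS T g n x - maxS T g n (T x)) ∂ℙ := hint.symm
    _ ≤ ∫ x, Set.indicator P g x ∂ℙ :=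
        integral_mono (hMint.sub hMTint) (hg.indicator hP) pt

lemma maxS_pos_exists {n : ℕ} {x : Ω} (h : 0 < maxS T g n x) :
    ∃ k, 0 < birkhoffSum T g k x := by
  induction n with
  | zero => simp [maxS] at h
  | succ n ih =>
    rcases lt_max_iff.mp h with h' | h'
    · exact ih h'
    · exact ⟨n + 1, h'⟩

lemma abs_indicator_le_abs_self (s : Set Ω) (f : Ω → ℝ) (x : Ω) :
    |Set.indicator s f x| ≤ |f x| := by
  by_cases hx : x ∈ s
  · rw [Set.indicator_of_mem hx]
  · rw [Set.indicator_of_notMem hx, abs_zero]; exact abs_nonneg _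

/-- Birkhoff sums of a function with negative integral are a.e. bounded above
for an ergodic transformation. -/
lemma sup_birkhoff_finite (hTe : Ergodic T ℙ) (hTm : Measurable T)
    (hg : Integrable g ℙ) (hgm : Measurable g) (hneg : ∫ x, g x ∂ℙ < 0) :
    ∀ᵐ x ∂ℙ, ∃ r : ℝ, ∀ k, birkhoffSum T g k x ≤ r := by
  have hT : MeasurePreserving T ℙ ℙ := hTe.toMeasurePreserving
  set S := birkhoffSum T g with hS
  have hSm : ∀ k, Measurable (S k) := fun k =>
    Finset.measurable_sum _ fun i _ => hgm.comp (hTm.iterate i)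
  set E := {x | ∀ N : ℕ, ∃ k, (N : ℝ) < S k x} with hEdef
  have hEm : MeasurableSet E := by
    have hEeq : E = ⋂ (N : ℕ), ⋃ k, {x | (N : ℝ) < S k x} := by
      ext x; simp [hEdef]
    rw [hEeq]
    exact MeasurableSet.iInter fun N => MeasurableSet.iUnion fun k =>
      measurableSet_lt measurable_const (hSm k)
  have hmem : ∀ x, x ∈ E ↔ ∀ r : ℝ, ∃ k, r < S k x := by
    intro x
    constructor
    · intro hx r
      obtain ⟨N, hN⟩ := exists_nat_gt r
      obtain ⟨k, hk⟩ := hx N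
      exact ⟨k, hN.trans hk⟩
    · intro hx N; exact hx N
  have hEinv : T ⁻¹' E = E := by
    ext x
    simp only [Set.mem_preimage]
    rw [hmem, hmem]
    constructor
    · intro h r
      obtain ⟨k, hk⟩ := h (r - g x)
      refine ⟨k + 1, ?_⟩
      rw [hS, birkhoffSum_succ']
      linarith
    · intro h r
      obtain ⟨k, hk⟩ := h (max 0 (r + g x))
      have hk0 : k ≠ 0 := by
        rintro rfl
        have h0 : S 0 x = 0 := by simp [hS, birkhoffSum]
        rw [h0] at hk
        exact absurd hk (not_lt.mpr (le_max_left _ _))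
      obtain ⟨k', rfl⟩ := Nat.exists_eq_succ_of_ne_zero hk0
      refine ⟨k', ?_⟩
      have := birkhoffSum_succ' T g k' x
      rw [hS] at hk ⊢
      have h2 : max 0 (r + g x) ≥ r + g x := le_max_right _ _
      linarith [this ▸ hk]
  rcases hTe.toPreErgodic.ae_mem_or_ae_notMem hEm hEinv with hE | hE
  · -- E is conull: derive a contradiction
    exfalso
    set U := {x | ∃ k, 0 < S k x} with hUdef
    have hEU : E ⊆ U := fun x hx => by
      obtain ⟨k, hk⟩ := hx 0
      exact ⟨k, by exact_mod_cast hk⟩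
    have hUuniv : ∀ᵐ x ∂ℙ, x ∈ U := hE.mono fun x hx => hEU hx
    -- dominated convergence
    have key : ∀ x, Tendsto (fun n => Set.indicator {y | 0 < maxS T g n y} g x)
        atTop (nhds (Set.indicator U g x)) := by
      intro x
      by_cases hx : x ∈ U
      · obtain ⟨k, hk⟩ := id hx
        have : ∀ n ≥ k, Set.indicator {y | 0 < maxS T g n y} g x = Set.indicator U g x := by
          intro n hn
          rw [Set.indicator_of_mem hx, Set.indicator_of_mem
            (show x ∈ {y | 0 < maxS T g n y} from
              lt_of_lt_of_le hk (birkhoffSum_le_maxS hn x))]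
        exact Tendsto.congr' (eventually_atTop.mpr ⟨k, fun n hn => (this n hn).symm⟩)
          tendsto_const_nhds
      · have : ∀ n, Set.indicator {y | 0 < maxS T g n y} g x = Set.indicator U g x := by
          intro n
          rw [Set.indicator_of_notMem hx, Set.indicator_of_notMem]
          intro hmem'
          exact hx (maxS_pos_exists hmem')
        exact Tendsto.congr (fun n => (this n).symm) tendsto_const_nhds
    have hUm : MeasurableSet U := by
      have hUeq : U = ⋃ k, {x | 0 < S k x} := by ext x; simp [hUdef]
      rw [hUeq]
      exact MeasurableSet.iUnion fun k => measurableSet_lt measurable_const (hSm k)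
    have hlim : Tendsto (fun n => ∫ x, Set.indicator {y | 0 < maxS T g n y} g x ∂ℙ)
        atTop (nhds (∫ x, Set.indicator U g x ∂ℙ)) := by
      refine tendsto_integral_of_dominated_convergence (fun x => |g x|) ?_ ?_ ?_ ?_
      · intro n
        exact (hgm.indicator (measurableSet_lt measurable_const
          (maxS_measurable hTm hgm n))).aestronglyMeasurable
      · exact hg.abs
      · intro n
        refine Eventually.of_forall fun x => ?_
        rw [Real.norm_eq_abs]
        exact (abs_indicator_le_abs_self _ _ _)
      · exact Eventually.of_forall key
    have hge : 0 ≤ ∫ x, Set.indicator U g x ∂ℙ :=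
      ge_of_tendsto' hlim fun n => hopf_maximal hT hTm hg hgm n
    have heq : ∫ x, Set.indicator U g x ∂ℙ = ∫ x, g x ∂ℙ := by
      refine integral_congr_ae ?_
      filter_upwards [hUuniv] with x hx
      rw [Set.indicator_of_mem hx]
    rw [heq] at hge
    linarith
  · -- E is null: conclude
    filter_upwards [hE] with x hx
    rw [hEdef, Set.mem_setOf_eq] at hx
    push_neg at hx
    obtain ⟨N, hN⟩ := hx
    exact ⟨N, fun k => hN k⟩

/-- Elementary real lemma used for the Birkhoff theorem. -/
lemma tendsto_of_linear_bounds {u : ℕ → ℝ} {L : ℝ}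
    (h : ∀ j : ℕ, ∃ r : ℝ, ∀ k : ℕ, |u k - k * L| ≤ k * (1 / (j + 1)) + r) :
    Tendsto (fun n : ℕ => u n / n) atTop (nhds L) := by
  rw [Metric.tendsto_atTop]
  intro ε hε
  obtain ⟨j, hj⟩ := exists_nat_one_div_lt (half_pos hε)
  obtain ⟨r, hr⟩ := h j
  obtain ⟨N, hN⟩ := exists_nat_gt (max (r / (ε / 2)) 1)
  refine ⟨N, fun n hn => ?_⟩
  have hN1 : (1 : ℝ) ≤ N := le_trans (le_max_right _ _) hN.le
  have hn1 : (1 : ℝ) ≤ n := hN1.trans (by exact_mod_cast hn)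
  have hnpos : (0 : ℝ) < n := by linarith
  rw [Real.dist_eq]
  have : u n / n - L = (u n - n * L) / n := by field_simp
  rw [this, abs_div, abs_of_pos hnpos]
  rw [div_lt_iff₀ hnpos]
  have h1 := hr n
  have hrn : r < ε / 2 * n := by
    rcases le_or_gt r 0 with h0 | h0
    · nlinarith
    · have : r / (ε / 2) < N := lt_of_le_of_lt (le_max_left _ _) hN
      have hN' : (N : ℝ) ≤ n := by exact_mod_cast hn
      have : r / (ε / 2) < n := this.trans_le hN'
      calc r = r / (ε / 2) * (ε / 2) := by field_simp
        _ < n * (ε / 2) := by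
            apply mul_lt_mul_of_pos_right this (half_pos hε)
        _ = ε / 2 * n := by ring
  have hjn : (n : ℝ) * (1 / (j + 1)) ≤ n * (ε / 2) := by
    apply mul_le_mul_of_nonneg_left hj.le hnpos.le
  calc |u n - n * L| ≤ n * (1 / (j + 1)) + r := h1
    _ < n * (ε / 2) + ε / 2 * n := by linarith
    _ = ε * n := by ring

lemma birkhoffSum_sub_const (T : Ω → Ω) (g : Ω → ℝ) (c : ℝ) (k : ℕ) (x : Ω) :
    birkhoffSum T (fun y => g y - c) k x = birkhoffSum T g k x - k * c := by
  simp only [birkhoffSum, Finset.sum_sub_distrib, Finset.sum_const, Finset.card_range,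
    nsmul_eq_mul]

/-- Birkhoff's pointwise ergodic theorem, ergodic case. -/
lemma birkhoff_ae (hTe : Ergodic T ℙ) (hTm : Measurable T)
    (hg : Integrable g ℙ) (hgm : Measurable g) :
    ∀ᵐ x ∂ℙ, Tendsto (fun n : ℕ => birkhoffSum T g n x / n) atTop
      (nhds (∫ x, g x ∂ℙ)) := by
  set L := ∫ x, g x ∂ℙ with hL
  have upper : ∀ j : ℕ, ∀ᵐ x ∂ℙ, ∃ r, ∀ k : ℕ,
      birkhoffSum T g k x - k * L ≤ k * (1 / (j + 1)) + r := by
    intro j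
    have hδ : (0 : ℝ) < 1 / ((j : ℝ) + 1) := by positivity
    have hint2 : Integrable (fun y => g y - (L + 1 / ((j : ℝ) + 1))) ℙ :=
      hg.sub (integrable_const _)
    have hm2 : Measurable (fun y => g y - (L + 1 / ((j : ℝ) + 1))) :=
      hgm.sub measurable_const
    have h1 : ∫ x, (g x - (L + 1 / ((j : ℝ) + 1))) ∂ℙ < 0 := by
      rw [integral_sub hg (integrable_const _), integral_const]
      simp [hL]
      linarith
    have := sup_birkhoff_finite hTe hTm hint2 hm2 h1
    filter_upwards [this] with x ⟨r, hr⟩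
    refine ⟨r, fun k => ?_⟩
    have h3 := hr k
    rw [birkhoffSum_sub_const] at h3
    nlinarith [Nat.cast_nonneg (α := ℝ) k]
  have lower : ∀ j : ℕ, ∀ᵐ x ∂ℙ, ∃ r, ∀ k : ℕ,
      -(birkhoffSum T g k x - k * L) ≤ k * (1 / (j + 1)) + r := by
    intro j
    have hδ : (0 : ℝ) < 1 / ((j : ℝ) + 1) := by positivity
    have hgneg : Integrable (fun x => -g x) ℙ := hg.neg
    have hint2 : Integrable (fun y => -g y - (-L + 1 / ((j : ℝ) + 1))) ℙ :=
      hgneg.sub (integrable_const _)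
    have hm2 : Measurable (fun y => -g y - (-L + 1 / ((j : ℝ) + 1))) :=
      hgm.neg.sub measurable_const
    have h1 : ∫ x, (-g x - (-L + 1 / ((j : ℝ) + 1))) ∂ℙ < 0 := by
      rw [integral_sub hgneg (integrable_const _), integral_neg, integral_const]
      simp [hL]
      positivity
    have := sup_birkhoff_finite hTe hTm hint2 hm2 h1
    filter_upwards [this] with x ⟨r, hr⟩
    refine ⟨r, fun k => ?_⟩
    have h3 := hr k
    rw [birkhoffSum_sub_const (g := fun y => -g y)] at h3
    have hneg : birkhoffSum T (fun y => -g y) k x = -birkhoffSum T g k x := by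
      simp [birkhoffSum]
    rw [hneg] at h3
    nlinarith [Nat.cast_nonneg (α := ℝ) k]
  have hae : ∀ᵐ x ∂ℙ, ∀ j : ℕ, (∃ r, ∀ k : ℕ,
      birkhoffSum T g k x - k * L ≤ k * (1 / (j + 1)) + r) ∧
      (∃ r, ∀ k : ℕ, -(birkhoffSum T g k x - k * L) ≤ k * (1 / (j + 1)) + r) := by
    rw [MeasureTheory.ae_all_iff]
    intro j
    filter_upwards [upper j, lower j] with x h1 h2
    exact ⟨h1, h2⟩
  filter_upwards [hae] with x hx
  apply tendsto_of_linear_bounds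
  intro j
  obtain ⟨⟨r1, hr1⟩, ⟨r2, hr2⟩⟩ := hx j
  refine ⟨max r1 r2, fun k => ?_⟩
  rw [abs_le]
  constructor
  · have := hr2 k
    have h2 : r2 ≤ max r1 r2 := le_max_right _ _
    linarith
  · have := hr1 k
    have h1 : r1 ≤ max r1 r2 := le_max_left _ _
    linarith

/-- A nonnegative measurable function whose increment along an ergodic map is
integrable is a.e. sublinear along orbits. -/
lemma tendsto_iterate_div (hTe : Ergodic T ℙ) (hTm : Measurable T)
    {B : Ω → ℝ} (hBm : Measurable B) (hB0 : ∀ x, 0 ≤ B x)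
    (hd : Integrable (fun x => B (T x) - B x) ℙ) :
    ∀ᵐ x ∂ℙ, Tendsto (fun n : ℕ => B (T^[n] x) / n) atTop (nhds 0) := by
  set d := fun x => B (T x) - B x with hddef
  have hdm : Measurable d := (hBm.comp hTm).sub hBm
  set c := ∫ x, d x ∂ℙ with hc
  have telescope : ∀ n x, birkhoffSum T d n x = B (T^[n] x) - B x := by
    intro n x
    induction n with
    | zero => simp [birkhoffSum]
    | succ n ih =>
      rw [birkhoffSum_succ, ih, hddef]
      rw [Function.iterate_succ_apply']
      ring
  have hB := birkhoff_ae hTe hTm hd hdm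
  have hBtendsto : ∀ᵐ x ∂ℙ, Tendsto (fun n : ℕ => B (T^[n] x) / n) atTop (nhds c) := by
    filter_upwards [hB] with x hx
    have h1 : Tendsto (fun n : ℕ => (B (T^[n] x) - B x) / n) atTop (nhds c) := by
      apply hx.congr
      intro n
      rw [telescope]
    have h2 : Tendsto (fun n : ℕ => B x / n) atTop (nhds 0) :=
      tendsto_const_div_atTop_nhds_zero_nat _
    have := h1.add h2
    rw [add_zero] at this
    apply this.congr
    intro n
    field_simp
    ring
  -- c ≥ 0
  have hane : (ae ℙ).NeBot := ae_neBot.mpr (IsProbabilityMeasure.ne_zero ℙ)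
  obtain ⟨x₀, hx₀⟩ := hBtendsto.exists
  have hc0 : 0 ≤ c :=
    ge_of_tendsto' hx₀ fun n => div_nonneg (hB0 _) (Nat.cast_nonneg n)
  rcases eq_or_lt_of_le hc0 with hceq | hcpos
  · rw [← hceq] at hBtendsto
    exact hBtendsto
  -- c > 0 : contradiction
  exfalso
  set Q := fun n : ℕ => {y | (c / 2) * n ≤ B y} with hQ
  have hQm : ∀ n, MeasurableSet (Q n) := fun n =>
    measurableSet_le measurable_const hBm
  have hQanti : Antitone Q := by
    intro m n hmn y hy
    simp only [hQ, Set.mem_setOf_eq] at hy ⊢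
    refine le_trans ?_ hy
    have : (m : ℝ) ≤ n := by exact_mod_cast hmn
    nlinarith
  have hQempty : ⋂ n, Q n = ∅ := by
    ext y
    simp only [Set.mem_iInter, Set.mem_empty_iff_false, iff_false, not_forall]
    obtain ⟨n, hn⟩ := exists_nat_gt (B y / (c / 2))
    refine ⟨n, ?_⟩
    simp only [hQ, Set.mem_setOf_eq, not_le]
    have h2 : (0:ℝ) < c / 2 := by linarith
    calc B y = B y / (c / 2) * (c / 2) := by field_simp
      _ < n * (c / 2) := by exact mul_lt_mul_of_pos_right hn h2
      _ = c / 2 * n := by ring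
  have hQlim : Tendsto (fun n => ℙ (Q n)) atTop (nhds 0) := by
    have := tendsto_measure_iInter_atTop (μ := ℙ)
      (fun n => (hQm n).nullMeasurableSet) hQanti ⟨0, measure_ne_top _ _⟩
    rw [hQempty] at this
    simpa [Function.comp_def] using this
  -- the sets R N
  set R := fun N : ℕ => ⋂ (n : ℕ) (_ : N ≤ n), T^[n] ⁻¹' Q n with hR
  have hRmono : Monotone R := by
    intro M N hMN y hy
    simp only [hR, Set.mem_iInter] at hy ⊢
    intro n hn
    exact hy n (hMN.trans hn)
  have hRae : ∀ᵐ x ∂ℙ, ∃ N, x ∈ R N := by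
    filter_upwards [hBtendsto] with x hx
    have := hx.eventually_const_lt (show c / 2 < c by linarith)
    rw [eventually_atTop] at this
    obtain ⟨N, hN⟩ := this
    refine ⟨max N 1, ?_⟩
    simp only [hR, Set.mem_iInter, Set.mem_preimage]
    intro n hn
    have hn1 : 1 ≤ n := le_trans (le_max_right _ _) hn
    have hnN : N ≤ n := le_trans (le_max_left _ _) hn
    have := hN n hnN
    have hnpos : (0:ℝ) < n := by exact_mod_cast hn1
    simp only [hQ, Set.mem_setOf_eq]
    rw [lt_div_iff₀ hnpos] at this
    linarith
  have hRunion : ℙ (⋃ N, R N) = 1 := by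
    have : ∀ᵐ x ∂ℙ, x ∈ ⋃ N, R N := by
      filter_upwards [hRae] with x ⟨N, hN⟩
      exact Set.mem_iUnion.mpr ⟨N, hN⟩
    have h2 : (⋃ N, R N) =ᵐ[ℙ] (Set.univ : Set Ω) := by
      rw [Filter.eventuallyEq_univ]
      exact this
    rw [measure_congr h2, measure_univ]
  have hRlim : Tendsto (fun N => ℙ (R N)) atTop (nhds 1) := by
    have := tendsto_measure_iUnion_atTop (μ := ℙ) hRmono
    rw [hRunion] at this
    exact this
  have h12 : (1 / 2 : ENNReal) < 1 := by
    rw [ENNReal.div_lt_iff (by norm_num) (by norm_num)]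
    · norm_num
  obtain ⟨N, hN⟩ := (hRlim.eventually_const_lt h12).exists
  have hQsmall := hQlim.eventually_lt_const (ENNReal.div_pos one_ne_zero (ENNReal.ofNat_ne_top (n := 2)))
  rw [eventually_atTop] at hQsmall
  obtain ⟨M, hM⟩ := hQsmall
  set n := max N M with hn
  have h1 : ℙ (Q n) < 1 / 2 := hM n (le_max_right _ _)
  have h2 : (1:ENNReal) / 2 < ℙ (T^[n] ⁻¹' Q n) := by
    refine lt_of_lt_of_le hN (measure_mono ?_)
    intro y hy
    simp only [hR, Set.mem_iInter] at hy
    exact hy n (le_max_left _ _)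
  have h3 : ℙ (T^[n] ⁻¹' Q n) = ℙ (Q n) :=
    (hTe.toMeasurePreserving.iterate n).measure_preimage (hQm n).nullMeasurableSet
  rw [h3] at h2
  exact absurd (h2.trans h1) (lt_irrefl _)

lemma abs_max_sub_le (a b : ℝ) (hb : 0 ≤ b) : |max 0 (a + b) - b| ≤ |a| := by
  have h1 : max 0 (a + b) ≤ |a| + b :=
    max_le (by positivity) (by linarith [le_abs_self a])
  have h2 : -|a| + b ≤ max 0 (a + b) :=
    le_trans (by linarith [neg_abs_le a]) (le_max_right _ _)
  rw [abs_le]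
  constructor <;> linarith

end Aux

/-- If `α : Ω → (0,∞)` is measurable with `log α ∈ L¹(ℙ)`,
`κ = ∫ log α dℙ` and `ε > 0`, then there is a measurable, positive, tempered
function `A` such that a.e. `ω` and every `l ≥ 0`,
`∏_{i=1}^{l} α(σ^{-i} ω) ≤ A(ω) e^{(κ+ε) l}`. -/
theorem stmt2 {Ω : Type*} [MeasurableSpace Ω] (ℙ : Measure Ω) [IsProbabilityMeasure ℙ]
    (σ : Equiv.Perm Ω) (hσ : Measurable (⇑σ)) (hσinv : Measurable (⇑σ.symm))
    (herg : Ergodic (⇑σ) ℙ)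
    (α : Ω → ℝ) (hα : Measurable α) (hαpos : ∀ ω, 0 < α ω)
    (hint : Integrable (fun ω => Real.log (α ω)) ℙ)
    (κ : ℝ) (hκ : κ = ∫ ω, Real.log (α ω) ∂ℙ)
    (ε : ℝ) (hε : 0 < ε) :
    ∃ A : Ω → ℝ, Measurable A ∧ (∀ ω, 0 < A ω) ∧ Tempered ℙ σ A ∧
      ∀ᵐ ω ∂ℙ, ∀ l : ℕ,
        (∏ i ∈ Finset.Icc 1 l, α ((σ ^ (-(i : ℤ))) ω)) ≤ A ω * Real.exp ((κ + ε) * l) := by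
  classical
  have hmp : MeasurePreserving (⇑σ) ℙ ℙ := herg.toMeasurePreserving
  set e : Ω ≃ᵐ Ω :=
    { toEquiv := (σ : Equiv.Perm Ω), measurable_toFun := hσ, measurable_invFun := hσinv }
    with hedef
  have hmpe : MeasurePreserving (⇑e) ℙ ℙ := hmp
  have hmpinv : MeasurePreserving (⇑σ.symm) ℙ ℙ := hmpe.symm e
  have herginv : Ergodic (⇑σ.symm) ℙ := by
    refine ⟨hmpinv, ⟨fun s hs hinv => ?_⟩⟩
    have h2 : ⇑σ ⁻¹' (⇑σ.symm ⁻¹' s) = s := by ext x; simp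
    rw [hinv] at h2
    exact herg.toPreErgodic.aeconst_set hs h2
  -- the basic cocycle function
  set g : Ω → ℝ := fun ω => Real.log (α (σ.symm ω)) - (κ + ε) with hgdef
  have hlogm : Measurable fun ω => Real.log (α ω) := hα.log
  have hgm : Measurable g := (hlogm.comp hσinv).sub measurable_const
  have hlogint : Integrable (fun ω => Real.log (α (σ.symm ω))) ℙ :=
    (hmpinv.integrable_comp hint.aestronglyMeasurable).mpr hint
  have hgint : Integrable g ℙ := hlogint.sub (integrable_const _)
  have hgval : ∫ x, g x ∂ℙ = -ε := by
    have h1 : ∫ x, Real.log (α (σ.symm x)) ∂ℙ = κ := by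
      rw [hκ]; exact integral_comp_mp hmpinv hint.aestronglyMeasurable
    rw [hgdef]
    rw [integral_sub hlogint (integrable_const _), h1, integral_const]
    simp
  have hSm : ∀ l, Measurable (birkhoffSum (⇑σ.symm) g l) := fun l =>
    Finset.measurable_sum _ fun i _ => hgm.comp (hσinv.iterate i)
  have hS0 : ∀ x : Ω, birkhoffSum (⇑σ.symm) g 0 x = 0 := fun x => by simp [birkhoffSum]
  set Binf : Ω → ENNReal :=
    fun x => ⨆ l : ℕ, ENNReal.ofReal (birkhoffSum (⇑σ.symm) g l x) with hBinfdef
  have hBinfm : Measurable Binf :=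
    Measurable.iSup fun l => ENNReal.measurable_ofReal.comp (hSm l)
  set B : Ω → ℝ := fun x => (Binf x).toReal with hBdef
  have hBm : Measurable B := hBinfm.ennreal_toReal
  have hB0 : ∀ x, 0 ≤ B x := fun x => ENNReal.toReal_nonneg
  have fact1 : ∀ x, Binf x ≠ ⊤ → ∀ l, birkhoffSum (⇑σ.symm) g l x ≤ B x := by
    intro x hx l
    have h1 : ENNReal.ofReal (birkhoffSum (⇑σ.symm) g l x) ≤ Binf x := by
      rw [hBinfdef]
      exact le_iSup (fun l => ENNReal.ofReal (birkhoffSum (⇑σ.symm) g l x)) l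
    rcases le_or_gt 0 (birkhoffSum (⇑σ.symm) g l x) with h0 | h0
    · calc birkhoffSum (⇑σ.symm) g l x
          = (ENNReal.ofReal (birkhoffSum (⇑σ.symm) g l x)).toReal :=
            (ENNReal.toReal_ofReal h0).symm
        _ ≤ (Binf x).toReal := ENNReal.toReal_mono hx h1
    · exact h0.le.trans (hB0 x)
  have fact2 : ∀ (x : Ω) (r : ℝ), (∀ l, birkhoffSum (⇑σ.symm) g l x ≤ r) →
      Binf x ≠ ⊤ ∧ B x ≤ r := by
    intro x r hr
    have hr0 : 0 ≤ r := by have := hr 0; rw [hS0 x] at this; linarith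
    have hle : Binf x ≤ ENNReal.ofReal r := by
      rw [hBinfdef]
      exact iSup_le fun l => ENNReal.ofReal_le_ofReal (hr l)
    refine ⟨ne_top_of_le_ne_top ENNReal.ofReal_ne_top hle, ?_⟩
    calc B x ≤ (ENNReal.ofReal r).toReal := ENNReal.toReal_mono ENNReal.ofReal_ne_top hle
      _ = r := ENNReal.toReal_ofReal hr0
  have key : ∀ x, Binf x ≠ ⊤ → Binf (σ.symm x) ≠ ⊤ →
      B x = max 0 (g x + B (σ.symm x)) := by
    intro x hx hTx
    have hub : ∀ l, birkhoffSum (⇑σ.symm) g l x ≤ max 0 (g x + B (σ.symm x)) := by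
      intro l
      cases l with
      | zero => rw [hS0 x]; exact le_max_left _ _
      | succ l =>
        rw [birkhoffSum_succ']
        exact le_trans (add_le_add_right (fact1 _ hTx l) _) (le_max_right _ _)
    have hupper := (fact2 x _ hub).2
    have hlow2 : g x + B (σ.symm x) ≤ B x := by
      have h3 : ∀ l, birkhoffSum (⇑σ.symm) g l (σ.symm x) ≤ B x - g x := by
        intro l
        have h4 := fact1 x hx (l + 1)
        rw [birkhoffSum_succ'] at h4
        linarith
      have := (fact2 _ _ h3).2
      linarith
    exact le_antisymm hupper (max_le (hB0 x) hlow2)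
  -- a.e. finiteness
  have hneg : ∫ x, g x ∂ℙ < 0 := by rw [hgval]; linarith
  have hfin : ∀ᵐ x ∂ℙ, Binf x ≠ ⊤ := by
    filter_upwards [sup_birkhoff_finite herginv hσinv hgint hgm hneg] with x hx
    obtain ⟨r, hr⟩ := hx
    exact (fact2 x r hr).1
  have hbadm : MeasurableSet {x | Binf x = ⊤} := hBinfm (measurableSet_singleton ⊤)
  have hbad0 : ℙ {x | Binf x = ⊤} = 0 := by
    have := ae_iff.mp hfin
    simpa [not_not] using this
  have hfinσ : ∀ᵐ x ∂ℙ, Binf (σ x) ≠ ⊤ := by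
    have h1 : ℙ (⇑σ ⁻¹' {x | Binf x = ⊤}) = 0 := by
      rw [hmp.measure_preimage hbadm.nullMeasurableSet, hbad0]
    have hset : {x | ¬ Binf (σ x) ≠ ⊤} = ⇑σ ⁻¹' {x | Binf x = ⊤} := by
      ext x; simp
    rw [ae_iff, hset]
    exact h1
  have hfinτ : ∀ᵐ x ∂ℙ, Binf (σ.symm x) ≠ ⊤ := by
    have h1 : ℙ (⇑σ.symm ⁻¹' {x | Binf x = ⊤}) = 0 := by
      rw [hmpinv.measure_preimage hbadm.nullMeasurableSet, hbad0]
    have hset : {x | ¬ Binf (σ.symm x) ≠ ⊤} = ⇑σ.symm ⁻¹' {x | Binf x = ⊤} := by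
      ext x; simp
    rw [ae_iff, hset]
    exact h1
  -- the increments are integrable
  have hgσ : Integrable (fun x => g (σ x)) ℙ :=
    (hmp.integrable_comp hgint.aestronglyMeasurable).mpr hgint
  have hd_int : Integrable (fun x => B (σ x) - B x) ℙ := by
    refine Integrable.mono' hgσ.abs ((hBm.comp hσ).sub hBm).aestronglyMeasurable ?_
    filter_upwards [hfin, hfinσ] with x h1 h2
    rw [Real.norm_eq_abs]
    have hk := key (σ x) h2 (by rw [Equiv.symm_apply_apply]; exact h1)
    rw [Equiv.symm_apply_apply] at hk
    rw [hk]
    exact abs_max_sub_le (g (σ x)) (B x) (hB0 x)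
  have hd'_int : Integrable (fun x => B (σ.symm x) - B x) ℙ := by
    refine Integrable.mono' hgint.abs ((hBm.comp hσinv).sub hBm).aestronglyMeasurable ?_
    filter_upwards [hfin, hfinτ] with x h1 h2
    rw [Real.norm_eq_abs, abs_sub_comm]
    have hk := key x h1 h2
    rw [hk]
    exact abs_max_sub_le (g x) (B (σ.symm x)) (hB0 _)
  have hDfwd := tendsto_iterate_div herg hσ hBm hB0 hd_int
  have hDbwd := tendsto_iterate_div herginv hσinv hBm hB0 hd'_int
  -- zpow translations
  have hzpow_pos : ∀ (m : ℕ) (x : Ω), (σ ^ (m : ℤ)) x = (⇑σ)^[m] x := by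
    intro m x
    rw [zpow_natCast]
    exact (congrFun (Equiv.Perm.coe_pow σ m) x : _)
  have hzpow_neg : ∀ (m : ℕ) (x : Ω), (σ ^ (-(m : ℤ))) x = (⇑σ.symm)^[m] x := by
    intro m x
    rw [zpow_neg, zpow_natCast, ← inv_pow]
    have h1 : (⇑(σ⁻¹ ^ m)) x = (⇑σ⁻¹)^[m] x := (congrFun (Equiv.Perm.coe_pow σ⁻¹ m) x : _)
    rw [h1, Equiv.Perm.inv_def]
  -- the function A
  refine ⟨fun x => Real.exp (B x), Real.measurable_exp.comp hBm,
    fun x => Real.exp_pos _, ?_, ?_⟩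
  · -- temperedness
    have hlog : ∀ z, Real.log |Real.exp (B z)| = B z := fun z => by
      rw [abs_of_pos (Real.exp_pos _), Real.log_exp]
    filter_upwards [hDfwd, hDbwd] with ω h1 h2
    rw [NormedAddCommGroup.tendsto_nhds_zero] at h1 h2
    rw [Int.cofinite_eq, tendsto_sup]
    constructor
    · -- atBot
      rw [NormedAddCommGroup.tendsto_nhds_zero]
      intro ε' hε'
      obtain ⟨N, hN⟩ := eventually_atTop.mp (h2 ε' hε')
      rw [eventually_atBot]
      refine ⟨-(N : ℤ) - 1, fun n hn => ?_⟩
      have hn0 : n ≤ 0 := by omega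
      set m : ℕ := (-n).toNat with hmdef
      have hm : -(m : ℤ) = n := by
        rw [hmdef]; omega
      have hmN : N ≤ m := by omega
      have habs : |(n : ℝ)| = (m : ℝ) := by
        rw [← hm]
        push_cast
        rw [abs_neg, abs_of_nonneg]
        positivity
      rw [hlog, habs, ← hm, hzpow_neg]
      have := hN m hmN
      calc ‖1 / (m : ℝ) * B ((⇑σ.symm)^[m] ω)‖
          = ‖B ((⇑σ.symm)^[m] ω) / (m : ℝ)‖ := by rw [one_div, inv_mul_eq_div]
        _ < ε' := this
    · -- atTop
      rw [NormedAddCommGroup.tendsto_nhds_zero]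
      intro ε' hε'
      obtain ⟨N, hN⟩ := eventually_atTop.mp (h1 ε' hε')
      rw [eventually_atTop]
      refine ⟨(N : ℤ) + 1, fun n hn => ?_⟩
      have hn0 : 0 ≤ n := by omega
      set m : ℕ := n.toNat with hmdef
      have hm : (m : ℤ) = n := by rw [hmdef]; omega
      have hmN : N ≤ m := by omega
      have habs : |(n : ℝ)| = (m : ℝ) := by
        rw [← hm]
        push_cast
        rw [abs_of_nonneg]
        positivity
      rw [hlog, habs, ← hm, hzpow_pos]
      have := hN m hmN
      calc ‖1 / (m : ℝ) * B ((⇑σ)^[m] ω)‖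
          = ‖B ((⇑σ)^[m] ω) / (m : ℝ)‖ := by rw [one_div, inv_mul_eq_div]
        _ < ε' := this
  · -- the product bound
    filter_upwards [hfin] with ω hω
    intro l
    have hSb : birkhoffSum (⇑σ.symm) g l ω ≤ B ω := fact1 ω hω l
    have hprod : (∏ i ∈ Finset.Icc 1 l, α ((σ ^ (-(i : ℤ))) ω)) =
        Real.exp (∑ i ∈ Finset.Icc 1 l, Real.log (α ((⇑σ.symm)^[i] ω))) := by
      rw [Real.exp_sum]
      refine Finset.prod_congr rfl fun i _ => ?_
      rw [Real.exp_log (hαpos _), hzpow_neg]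
    have hsum : (∑ i ∈ Finset.Icc 1 l, Real.log (α ((⇑σ.symm)^[i] ω))) =
        birkhoffSum (⇑σ.symm) g l ω + (κ + ε) * l := by
      have h1 : ∑ i ∈ Finset.Icc 1 l, Real.log (α ((⇑σ.symm)^[i] ω)) =
          ∑ k ∈ Finset.range l, Real.log (α ((⇑σ.symm)^[k + 1] ω)) := by
        rw [← Finset.Ico_add_one_right_eq_Icc, Finset.sum_Ico_eq_sum_range]
        exact Finset.sum_congr (by norm_num) fun k _ => by rw [Nat.add_comm 1 k]
      have h2 : birkhoffSum (⇑σ.symm) g l ω =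
          ∑ k ∈ Finset.range l, (Real.log (α ((⇑σ.symm)^[k + 1] ω)) - (κ + ε)) := by
        refine Finset.sum_congr rfl fun k _ => ?_
        rw [hgdef]
        rw [Function.iterate_succ_apply']
      rw [h1, h2, Finset.sum_sub_distrib, Finset.sum_const, Finset.card_range,
        nsmul_eq_mul]
      ring
    rw [hprod, hsum]
    rw [Real.exp_add]
    have hle2 : Real.exp (birkhoffSum (⇑σ.symm) g l ω) ≤ Real.exp (B ω) :=
      Real.exp_le_exp.mpr hSb
    have hpos2 : (0 : ℝ) < Real.exp ((κ + ε) * l) := Real.exp_pos _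
    calc Real.exp (birkhoffSum (⇑σ.symm) g l ω) * Real.exp ((κ + ε) * ↑l)
        ≤ Real.exp (B ω) * Real.exp ((κ + ε) * ↑l) :=
          mul_le_mul_of_nonneg_right hle2 hpos2.le
      _ = Real.exp (B ω) * Real.exp ((κ + ε) * ↑l) := rfl
end

section
/- Let b = (b_j)_{j∈ℤ} be a sequence of nonnegative reals with var(b) := ∑_{j∈ℤ} |b_j − b_{j−1}| < ∞ and b_j → 0 as j → ±∞. Then for every trigonometric polynomial f = ∑_j a_j φ_j, ‖∑_j b_j a_j φ_j‖_{L^p(𝕋)} ≤ (C_p/2) var(b) ‖f‖_{L^p(𝕋)}. -/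
open MeasureTheory
open scoped ENNReal

instance : Fact ((0 : ℝ) < 1) := ⟨one_pos⟩

open Filter

private lemma cont_trig (s : Finset ℤ) (c : ℤ → ℂ) :
    Continuous (fun x : AddCircle (1 : ℝ) => ∑ l ∈ s, c l * fourier l x) :=
  continuous_finset_sum _ fun l _ => continuous_const.mul (map_continuous (fourier l))

private lemma key_zero {p : ℝ≥0∞} {b : ℤ → ℝ} (hbz : ∀ j, b j = 0) (s : Finset ℤ) (a : ℤ → ℂ)
    (X : ℝ≥0∞) :
    eLpNorm (fun x : AddCircle (1 : ℝ) => ∑ j ∈ s, (b j : ℂ) * a j * fourier j x) p volume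
      ≤ X := by
  have h : (fun x : AddCircle (1 : ℝ) => ∑ j ∈ s, (b j : ℂ) * a j * fourier j x)
      = fun _ => 0 := by
    funext x; simp [hbz]
  rw [h]
  exact le_trans (le_of_eq eLpNorm_zero') (zero_le (a := X))

private lemma key (p : ℝ≥0∞) (hp : 1 ≤ p) (Cp : ℝ) (hCp : 0 ≤ Cp)
    (hproj : ∀ i j : ℤ, i ≤ j → ∀ (s : Finset ℤ) (a : ℤ → ℂ),
      eLpNorm (fun x : AddCircle (1 : ℝ) =>
          ∑ l ∈ s ∩ Finset.Icc i j, a l * fourier l x) p volume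
        ≤ ENNReal.ofReal Cp *
          eLpNorm (fun x : AddCircle (1 : ℝ) => ∑ l ∈ s, a l * fourier l x) p volume) :
    ∀ n : ℕ, ∀ b : ℤ → ℝ, (∀ j, 0 ≤ b j) → ∀ t : Finset ℤ, (∀ j, b j ≠ 0 → j ∈ t) →
      t.card ≤ n → ∀ (s : Finset ℤ) (a : ℤ → ℂ),
      eLpNorm (fun x : AddCircle (1 : ℝ) => ∑ j ∈ s, (b j : ℂ) * a j * fourier j x) p volume
        ≤ ENNReal.ofReal ((Cp / 2) * ∑' j : ℤ, |b j - b (j - 1)|) *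
          eLpNorm (fun x : AddCircle (1 : ℝ) => ∑ j ∈ s, a j * fourier j x) p volume := by
  intro n
  induction n with
  | zero =>
    intro b hb t ht hcard s a
    have ht0 : t = ∅ := Finset.card_eq_zero.1 (Nat.le_zero.1 hcard)
    have hbz : ∀ j, b j = 0 := by
      intro j
      by_contra h
      have := ht j h
      simp [ht0] at this
    exact key_zero hbz s a _
  | succ n ih =>
    intro b hb t ht hcard s a
    classical
    by_cases hbz : ∀ j, b j = 0
    · exact key_zero hbz s a _
    push_neg at hbz
    obtain ⟨j0, hj0⟩ := hbz
    set S : Finset ℤ := t.filter fun j => b j ≠ 0 with hS_def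
    have hmemS : ∀ j, j ∈ S ↔ b j ≠ 0 := fun j =>
      ⟨fun h => (Finset.mem_filter.1 h).2, fun h => Finset.mem_filter.2 ⟨ht j h, h⟩⟩
    have hSne : S.Nonempty := ⟨j0, (hmemS j0).2 hj0⟩
    set i : ℤ := S.min' hSne with hi_def
    have hbi : b i ≠ 0 := (hmemS i).1 (S.min'_mem hSne)
    have hbipos : 0 < b i := lt_of_le_of_ne (hb i) (Ne.symm hbi)
    have hbprev : b (i - 1) = 0 := by
      by_contra h
      have := S.min'_le _ ((hmemS _).2 h)
      omega
    have hPex : ∃ k : ℕ, b (i + k + 1) = 0 := by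
      refine ⟨(S.max' hSne - i).toNat + 1, ?_⟩
      by_contra h
      have h1 := S.le_max' _ ((hmemS _).2 h)
      have h2 : i ≤ S.max' hSne := S.min'_le _ (S.max'_mem hSne)
      omega
    set m0 : ℕ := Nat.find hPex with hm0_def
    set j : ℤ := i + m0 with hj_def
    have hij : i ≤ j := by omega
    have hbj1 : b (j + 1) = 0 := by
      have := Nat.find_spec hPex
      rwa [← hm0_def] at this
    have hrun : ∀ k, i ≤ k → k ≤ j → b k ≠ 0 := by
      intro k hk1 hk2
      rcases eq_or_lt_of_le hk1 with rfl | hlt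
      · exact hbi
      · have hk : k = i + ((k - i - 1).toNat : ℤ) + 1 := by omega
        rw [hk]
        exact Nat.find_min hPex (by omega)
    obtain ⟨k0, hk0mem, hk0min⟩ :=
      Finset.exists_min_image (Finset.Icc i j) b ⟨i, Finset.mem_Icc.2 ⟨le_refl i, hij⟩⟩
    set tmin : ℝ := b k0 with htmin_def
    have hk0' := Finset.mem_Icc.1 hk0mem
    have htminpos : 0 < tmin :=
      lt_of_le_of_ne (hb k0) (Ne.symm (hrun k0 hk0'.1 hk0'.2))
    set b' : ℤ → ℝ := fun k => if k ∈ Finset.Icc i j then b k - tmin else b k with hb'_def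
    have htle : ∀ k ∈ Finset.Icc i j, tmin ≤ b k := hk0min
    have hb'0 : ∀ k, 0 ≤ b' k := by
      intro k
      simp only [hb'_def]
      split
      · next h => linarith [htle k h]
      · exact hb k
    have hb'supp : ∀ k, b' k ≠ 0 → k ∈ t.erase k0 := by
      intro k h
      rcases eq_or_ne k k0 with rfl | hne
      · exfalso
        apply h
        simp only [hb'_def, if_pos hk0mem]
        ring
      · refine Finset.mem_erase.2 ⟨hne, ht k ?_⟩
        intro hbk
        apply h
        simp only [hb'_def, hbk]
        split
        · next hmem => exact absurd hbk (hrun k (Finset.mem_Icc.1 hmem).1 (Finset.mem_Icc.1 hmem).2)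
        · rfl
    have hk0t : k0 ∈ t := ht k0 (hrun k0 hk0'.1 hk0'.2)
    have hcard' : (t.erase k0).card ≤ n := by
      rw [Finset.card_erase_of_mem hk0t]
      omega
    have IH := ih b' hb'0 (t.erase k0) hb'supp hcard' s a
    -- variation computation
    set u : Finset ℤ := (t ∪ t.image (· + 1)) ∪ {i, j + 1} with hu_def
    have hiu : i ∈ u := by simp [hu_def]
    have hne_ij : (j + 1 : ℤ) ≠ i := by omega
    have hju : j + 1 ∈ u.erase i := Finset.mem_erase.2 ⟨hne_ij, by simp [hu_def]⟩
    have hd0 : ∀ k ∉ u, b k = 0 ∧ b (k - 1) = 0 := by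
      intro k hk
      simp only [hu_def, Finset.mem_union, Finset.mem_image, Finset.mem_insert,
        Finset.mem_singleton, not_or] at hk
      constructor
      · by_contra h
        exact hk.1.1 (ht k h)
      · by_contra h
        exact hk.1.2 ⟨k - 1, ht _ h, by ring⟩
    have hd'0 : ∀ k ∉ u, b' k = 0 ∧ b' (k - 1) = 0 := by
      intro k hk
      obtain ⟨h1, h2⟩ := hd0 k hk
      constructor
      · simp only [hb'_def]
        split
        · next hmem =>
          exact absurd h1 (hrun k (Finset.mem_Icc.1 hmem).1 (Finset.mem_Icc.1 hmem).2)
        · exact h1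
      · simp only [hb'_def]
        split
        · next hmem =>
          exact absurd h2 (hrun _ (Finset.mem_Icc.1 hmem).1 (Finset.mem_Icc.1 hmem).2)
        · exact h2
    have htsum_b : ∑' k : ℤ, |b k - b (k - 1)| = ∑ k ∈ u, |b k - b (k - 1)| :=
      tsum_eq_sum fun k hk => by
        obtain ⟨h1, h2⟩ := hd0 k hk
        simp [h1, h2]
    have htsum_b' : ∑' k : ℤ, |b' k - b' (k - 1)| = ∑ k ∈ u, |b' k - b' (k - 1)| :=
      tsum_eq_sum fun k hk => by
        obtain ⟨h1, h2⟩ := hd'0 k hk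
        simp [h1, h2]
    have hd'eq : ∀ k : ℤ, k ≠ i → k ≠ j + 1 → b' k - b' (k - 1) = b k - b (k - 1) := by
      intro k h1 h2
      simp only [hb'_def]
      by_cases hk : k ∈ Finset.Icc i j
      · have hk' : k - 1 ∈ Finset.Icc i j := by
          simp only [Finset.mem_Icc] at hk ⊢
          omega
        rw [if_pos hk, if_pos hk']
        ring
      · have hk' : k - 1 ∉ Finset.Icc i j := by
          simp only [Finset.mem_Icc] at hk ⊢
          omega
        rw [if_neg hk, if_neg hk']
    have habs_i : |b' i - b' (i - 1)| = |b i - b (i - 1)| - tmin := by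
      have h1 : i ∈ Finset.Icc i j := Finset.mem_Icc.2 ⟨le_refl i, hij⟩
      have h2 : i - 1 ∉ Finset.Icc i j := by simp [Finset.mem_Icc]
      simp only [hb'_def, if_pos h1, if_neg h2, hbprev]
      rw [abs_of_nonneg (by linarith [htle i h1] : (0:ℝ) ≤ b i - tmin - 0),
        abs_of_nonneg (by linarith : (0:ℝ) ≤ b i - 0)]
      ring
    have habs_j : |b' (j + 1) - b' (j + 1 - 1)| = |b (j + 1) - b (j + 1 - 1)| - tmin := by
      have h1 : j + 1 ∉ Finset.Icc i j := by simp [Finset.mem_Icc]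
      have h2 : j + 1 - 1 ∈ Finset.Icc i j := by simp [Finset.mem_Icc]; omega
      have h3 : tmin ≤ b (j + 1 - 1) := htle _ h2
      simp only [hb'_def, if_pos h2, if_neg h1, hbj1]
      rw [abs_of_nonpos (by linarith), abs_of_nonpos (by linarith)]
      ring
    have hsum_eq : ∑' k : ℤ, |b' k - b' (k - 1)|
        = (∑' k : ℤ, |b k - b (k - 1)|) - 2 * tmin := by
      rw [htsum_b, htsum_b']
      rw [← Finset.add_sum_erase u (fun k => |b' k - b' (k - 1)|) hiu,
        ← Finset.add_sum_erase _ (fun k => |b' k - b' (k - 1)|) hju,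
        ← Finset.add_sum_erase u (fun k => |b k - b (k - 1)|) hiu,
        ← Finset.add_sum_erase _ (fun k => |b k - b (k - 1)|) hju]
      have hrest : ∑ k ∈ (u.erase i).erase (j + 1), |b' k - b' (k - 1)|
          = ∑ k ∈ (u.erase i).erase (j + 1), |b k - b (k - 1)| := by
        refine Finset.sum_congr rfl fun k hk => ?_
        have h1 : k ≠ j + 1 := (Finset.mem_erase.1 hk).1
        have h2 : k ≠ i := (Finset.mem_erase.1 (Finset.mem_erase.1 hk).2).1
        rw [hd'eq k h2 h1]
      rw [hrest, habs_i, habs_j]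
      ring
    -- decomposition of the function
    have hdecomp : (fun x : AddCircle (1 : ℝ) => ∑ l ∈ s, (b l : ℂ) * a l * fourier l x)
        = (fun x : AddCircle (1 : ℝ) =>
            (tmin : ℂ) * ∑ l ∈ s ∩ Finset.Icc i j, a l * fourier l x)
          + fun x : AddCircle (1 : ℝ) => ∑ l ∈ s, (b' l : ℂ) * a l * fourier l x := by
      funext x
      simp only [Pi.add_apply, Finset.mul_sum, ← Finset.filter_mem_eq_inter, Finset.sum_filter,
        ← Finset.sum_add_distrib]
      refine Finset.sum_congr rfl fun l _ => ?_
      by_cases hmem : l ∈ Finset.Icc i j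
      · simp only [hb'_def, if_pos hmem]
        push_cast
        ring
      · simp only [hb'_def, if_neg hmem]
        ring
    rw [hdecomp]
    set N := eLpNorm (fun x : AddCircle (1 : ℝ) => ∑ l ∈ s, a l * fourier l x) p volume with hN
    have hGc : Continuous (fun x : AddCircle (1 : ℝ) =>
        (tmin : ℂ) * ∑ l ∈ s ∩ Finset.Icc i j, a l * fourier l x) :=
      continuous_const.mul (cont_trig _ a)
    have hHc : Continuous (fun x : AddCircle (1 : ℝ) =>
        ∑ l ∈ s, (b' l : ℂ) * a l * fourier l x) := by
      have := cont_trig s (fun l => (b' l : ℂ) * a l)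
      simpa [mul_assoc] using this
    have hG1 : eLpNorm (fun x : AddCircle (1 : ℝ) =>
        (tmin : ℂ) * ∑ l ∈ s ∩ Finset.Icc i j, a l * fourier l x) p volume
        ≤ ENNReal.ofReal tmin * (ENNReal.ofReal Cp * N) := by
      have hsmul : (fun x : AddCircle (1 : ℝ) =>
          (tmin : ℂ) * ∑ l ∈ s ∩ Finset.Icc i j, a l * fourier l x)
          = (tmin : ℂ) • fun x : AddCircle (1 : ℝ) =>
              ∑ l ∈ s ∩ Finset.Icc i j, a l * fourier l x := rfl
      rw [hsmul, eLpNorm_const_smul]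
      have hnorm : ‖(tmin : ℂ)‖ₑ = ENNReal.ofReal tmin := by
        rw [← Real.enorm_eq_ofReal (le_of_lt htminpos)]
        rw [enorm_eq_nnnorm, enorm_eq_nnnorm, Complex.nnnorm_real]
      rw [hnorm]
      exact mul_le_mul_right (hproj i j hij s a) _
    have hV'nonneg : (0 : ℝ) ≤ ∑' k : ℤ, |b' k - b' (k - 1)| :=
      tsum_nonneg fun _ => abs_nonneg _
    calc eLpNorm ((fun x : AddCircle (1 : ℝ) =>
            (tmin : ℂ) * ∑ l ∈ s ∩ Finset.Icc i j, a l * fourier l x)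
          + fun x : AddCircle (1 : ℝ) => ∑ l ∈ s, (b' l : ℂ) * a l * fourier l x) p volume
        ≤ eLpNorm (fun x : AddCircle (1 : ℝ) =>
            (tmin : ℂ) * ∑ l ∈ s ∩ Finset.Icc i j, a l * fourier l x) p volume
          + eLpNorm (fun x : AddCircle (1 : ℝ) =>
            ∑ l ∈ s, (b' l : ℂ) * a l * fourier l x) p volume :=
        eLpNorm_add_le hGc.aestronglyMeasurable hHc.aestronglyMeasurable hp
      _ ≤ ENNReal.ofReal tmin * (ENNReal.ofReal Cp * N)
          + ENNReal.ofReal ((Cp / 2) * ∑' k : ℤ, |b' k - b' (k - 1)|) * N :=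
        add_le_add hG1 IH
      _ = ENNReal.ofReal ((Cp / 2) * ∑' k : ℤ, |b k - b (k - 1)|) * N := by
        rw [← mul_assoc, ← ENNReal.ofReal_mul (le_of_lt htminpos), ← add_mul]
        congr 1
        rw [← ENNReal.ofReal_add (by positivity) (mul_nonneg (by positivity) hV'nonneg), hsum_eq]
        congr 1
        ring

private lemma telescope_sum (b : ℤ → ℝ) (m : ℤ) (n : ℕ) :
    ∑ i ∈ Finset.range n, (b (m - i) - b (m - i - 1)) = b m - b (m - n) := by
  induction n with
  | zero => simp
  | succ n ih =>
    rw [Finset.sum_range_succ, ih, show (m - (n + 1 : ℕ) : ℤ) = m - n - 1 by push_cast; ring]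
    ring

private lemma telescope_sum2 (b : ℤ → ℝ) (M : ℤ) (n : ℕ) :
    ∑ i ∈ Finset.range n, (b (M + 1 + i) - b (M + 1 + i - 1)) = b (M + n) - b M := by
  induction n with
  | zero => simp
  | succ n ih =>
    rw [Finset.sum_range_succ, ih, show (M + (n + 1 : ℕ) : ℤ) = M + 1 + n by push_cast; ring,
      show (M + 1 + (n : ℤ) - 1) = M + n by ring]
    ring

private lemma summable_tail (b : ℤ → ℝ)
    (hvar : Summable fun j : ℤ => |b j - b (j - 1)|) (m : ℤ) :
    Summable fun i : ℕ => |b (m - i) - b (m - i - 1)| := by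
  have hinj : Function.Injective (fun i : ℕ => m - (i : ℤ)) := by
    intro a b h
    simp only at h
    omega
  exact hvar.comp_injective hinj

private lemma summable_head (b : ℤ → ℝ)
    (hvar : Summable fun j : ℤ => |b j - b (j - 1)|) (M : ℤ) :
    Summable fun i : ℕ => |b (M + 1 + i) - b (M + 1 + i - 1)| := by
  have hinj : Function.Injective (fun i : ℕ => M + 1 + (i : ℤ)) := by
    intro a b h
    simp only at h
    omega
  exact hvar.comp_injective hinj

private lemma hasSum_tail (b : ℤ → ℝ)
    (hvar : Summable fun j : ℤ => |b j - b (j - 1)|)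
    (hlim : Tendsto b atBot (nhds 0)) (m : ℤ) :
    HasSum (fun i : ℕ => b (m - i) - b (m - i - 1)) (b m) := by
  have hs : Summable fun i : ℕ => b (m - i) - b (m - i - 1) := (summable_tail b hvar m).of_abs
  have h1 := hs.hasSum.tendsto_sum_nat
  have hbot : Tendsto (fun n : ℕ => m - (n : ℤ)) atTop atBot := by
    apply tendsto_atBot.2
    intro c
    filter_upwards [eventually_ge_atTop (m - c).toNat] with n hn
    omega
  have h2 : Tendsto (fun n : ℕ => ∑ i ∈ Finset.range n, (b (m - i) - b (m - i - 1)))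
      atTop (nhds (b m)) := by
    simp only [telescope_sum]
    simpa using tendsto_const_nhds.sub (hlim.comp hbot)
  have h3 := tendsto_nhds_unique h1 h2
  rw [← h3]
  exact hs.hasSum

private lemma hasSum_head (b : ℤ → ℝ)
    (hvar : Summable fun j : ℤ => |b j - b (j - 1)|)
    (hlim : Tendsto b atTop (nhds 0)) (M : ℤ) :
    HasSum (fun i : ℕ => b (M + 1 + i) - b (M + 1 + i - 1)) (-b M) := by
  have hs : Summable fun i : ℕ => b (M + 1 + i) - b (M + 1 + i - 1) :=
    (summable_head b hvar M).of_abs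
  have h1 := hs.hasSum.tendsto_sum_nat
  have htop : Tendsto (fun n : ℕ => M + (n : ℤ)) atTop atTop := by
    apply tendsto_atTop.2
    intro c
    filter_upwards [eventually_ge_atTop (c - M).toNat] with n hn
    omega
  have h2 : Tendsto (fun n : ℕ => ∑ i ∈ Finset.range n, (b (M + 1 + i) - b (M + 1 + i - 1)))
      atTop (nhds (-b M)) := by
    simp only [telescope_sum2]
    simpa using (hlim.comp htop).sub tendsto_const_nhds
  have h3 := tendsto_nhds_unique h1 h2
  rw [← h3]
  exact hs.hasSum

private def eIic (m : ℤ) : ℕ ≃ (Set.Iic m) where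
  toFun i := ⟨m - i, by simp only [Set.mem_Iic]; omega⟩
  invFun k := (m - k.1).toNat
  left_inv i := by simp only; omega
  right_inv k := by
    have := k.2
    simp only [Set.mem_Iic] at this
    apply Subtype.ext
    simp only
    omega

private def eIci (M : ℤ) : ℕ ≃ (Set.Ici M) where
  toFun i := ⟨M + i, by simp only [Set.mem_Ici]; omega⟩
  invFun k := (k.1 - M).toNat
  left_inv i := by simp only; omega
  right_inv k := by
    have := k.2
    simp only [Set.mem_Ici] at this
    apply Subtype.ext
    simp only
    omega

private lemma trunc_var (b : ℤ → ℝ) (hb : ∀ j, 0 ≤ b j)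
    (hvar : Summable fun j : ℤ => |b j - b (j - 1)|)
    (hbot : Tendsto b atBot (nhds 0)) (htop : Tendsto b atTop (nhds 0))
    (m M : ℤ) (hmM : m ≤ M) :
    ∑' k : ℤ, |(fun k : ℤ => if k ∈ Finset.Icc m M then b k else 0) k
        - (fun k : ℤ => if k ∈ Finset.Icc m M then b k else 0) (k - 1)|
      ≤ ∑' k : ℤ, |b k - b (k - 1)| := by
  classical
  set b' : ℤ → ℝ := fun k => if k ∈ Finset.Icc m M then b k else 0 with hb'_def
  have hd'0 : ∀ k ∉ Finset.Icc m (M + 1), |b' k - b' (k - 1)| = 0 := by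
    intro k hk
    simp only [Finset.mem_Icc, not_and_or, not_le] at hk
    have h1 : k ∉ Finset.Icc m M := by simp only [Finset.mem_Icc]; omega
    have h2 : k - 1 ∉ Finset.Icc m M := by simp only [Finset.mem_Icc]; omega
    simp only [hb'_def]
    rw [if_neg h1, if_neg h2]
    simp
  have hLHS : ∑' k : ℤ, |b' k - b' (k - 1)| = ∑ k ∈ Finset.Icc m (M + 1), |b' k - b' (k - 1)| :=
    tsum_eq_sum hd'0
  have hset : Finset.Icc m (M + 1) = insert m (insert (M + 1) (Finset.Icc (m + 1) M)) := by
    ext k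
    simp only [Finset.mem_Icc, Finset.mem_insert]
    omega
  have hm1 : m ∉ insert (M + 1) (Finset.Icc (m + 1) M) := by
    simp only [Finset.mem_insert, Finset.mem_Icc]
    omega
  have hm2 : (M + 1) ∉ Finset.Icc (m + 1) M := by
    simp only [Finset.mem_Icc]
    omega
  have hterm_m : |b' m - b' (m - 1)| = b m := by
    have h1 : m ∈ Finset.Icc m M := Finset.mem_Icc.2 ⟨le_refl m, hmM⟩
    have h2 : m - 1 ∉ Finset.Icc m M := by simp [Finset.mem_Icc]
    simp only [hb'_def, if_pos h1, if_neg h2, sub_zero]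
    exact abs_of_nonneg (hb m)
  have hterm_M : |b' (M + 1) - b' (M + 1 - 1)| = b M := by
    have h1 : M + 1 ∉ Finset.Icc m M := by simp [Finset.mem_Icc]
    have h2 : M + 1 - 1 ∈ Finset.Icc m M := by simp [Finset.mem_Icc]; omega
    simp only [hb'_def, if_pos h2, if_neg h1, zero_sub, abs_neg]
    rw [show (M + 1 - 1 : ℤ) = M by ring]
    exact abs_of_nonneg (hb M)
  have hmid : ∑ k ∈ Finset.Icc (m + 1) M, |b' k - b' (k - 1)|
      = ∑ k ∈ Finset.Icc (m + 1) M, |b k - b (k - 1)| := by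
    refine Finset.sum_congr rfl fun k hk => ?_
    have hk' := Finset.mem_Icc.1 hk
    have h1 : k ∈ Finset.Icc m M := by simp only [Finset.mem_Icc]; omega
    have h2 : k - 1 ∈ Finset.Icc m M := by simp only [Finset.mem_Icc]; omega
    simp only [hb'_def, if_pos h1, if_pos h2]
  have hLHS2 : ∑' k : ℤ, |b' k - b' (k - 1)|
      = b m + (b M + ∑ k ∈ Finset.Icc (m + 1) M, |b k - b (k - 1)|) := by
    rw [hLHS, hset, Finset.sum_insert hm1, Finset.sum_insert hm2, hterm_m, hterm_M, hmid]
  -- lower bounds on the three pieces of the full variation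
  have hbm : b m ≤ ∑' k : (Set.Iic m), |b k - b ((k : ℤ) - 1)| := by
    have h1 : b m = ∑' i : ℕ, (b (m - i) - b (m - i - 1)) := (hasSum_tail b hvar hbot m).tsum_eq.symm
    have h2 : ∑' i : ℕ, (b (m - i) - b (m - i - 1)) ≤ ∑' i : ℕ, |b (m - i) - b (m - i - 1)| :=
      Summable.tsum_le_tsum (fun i => le_abs_self _) (summable_tail b hvar m).of_abs (summable_tail b hvar m)
    have h3 : ∑' i : ℕ, |b (m - i) - b (m - i - 1)|
        = ∑' k : (Set.Iic m), |b k - b ((k : ℤ) - 1)| := by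
      rw [← Equiv.tsum_eq (eIic m) (fun k : Set.Iic m => |b k - b ((k : ℤ) - 1)|)]
      exact tsum_congr fun i => rfl
    linarith
  have hbM : b M ≤ ∑' k : (Set.Ici (M + 1)), |b k - b ((k : ℤ) - 1)| := by
    have h1 : -b M = ∑' i : ℕ, (b (M + 1 + i) - b (M + 1 + i - 1)) :=
      (hasSum_head b hvar htop M).tsum_eq.symm
    have h2 : ∑' i : ℕ, -(b (M + 1 + i) - b (M + 1 + i - 1))
        ≤ ∑' i : ℕ, |b (M + 1 + i) - b (M + 1 + i - 1)| :=
      Summable.tsum_le_tsum (fun i => neg_le_abs _) ((summable_head b hvar M).of_abs.neg)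
        (summable_head b hvar M)
    rw [tsum_neg, ← h1, neg_neg] at h2
    have h3 : ∑' i : ℕ, |b (M + 1 + i) - b (M + 1 + i - 1)|
        = ∑' k : (Set.Ici (M + 1)), |b k - b ((k : ℤ) - 1)| := by
      rw [← Equiv.tsum_eq (eIci (M + 1)) (fun k : Set.Ici (M + 1) => |b k - b ((k : ℤ) - 1)|)]
      exact tsum_congr fun i => rfl
    linarith
  have hmid2 : ∑ k ∈ Finset.Icc (m + 1) M, |b k - b (k - 1)|
      = ∑' k : ((Finset.Icc (m + 1) M : Finset ℤ) : Set ℤ), |b k - b ((k : ℤ) - 1)| :=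
    (Finset.tsum_subtype _ _).symm
  have huniv : (Set.univ : Set ℤ)
      = Set.Iic m ∪ (((Finset.Icc (m + 1) M : Finset ℤ) : Set ℤ) ∪ Set.Ici (M + 1)) := by
    ext k
    simp only [Set.mem_univ, Set.mem_union, Set.mem_Iic, Set.mem_Ici, Finset.coe_Icc,
      Set.mem_Icc, true_iff]
    omega
  have hdisj1 : Disjoint (Set.Iic m)
      (((Finset.Icc (m + 1) M : Finset ℤ) : Set ℤ) ∪ Set.Ici (M + 1)) := by
    rw [Set.disjoint_left]
    intro k hk hk'
    simp only [Set.mem_Iic] at hk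
    simp only [Set.mem_union, Finset.coe_Icc, Set.mem_Icc, Set.mem_Ici] at hk'
    omega
  have hdisj2 : Disjoint (((Finset.Icc (m + 1) M : Finset ℤ) : Set ℤ)) (Set.Ici (M + 1)) := by
    rw [Set.disjoint_left]
    intro k hk hk'
    simp only [Finset.coe_Icc, Set.mem_Icc] at hk
    simp only [Set.mem_Ici] at hk'
    omega
  have hRHS : ∑' k : ℤ, |b k - b (k - 1)|
      = (∑' k : (Set.Iic m), |b k - b ((k : ℤ) - 1)|)
        + ((∑' k : ((Finset.Icc (m + 1) M : Finset ℤ) : Set ℤ), |b k - b ((k : ℤ) - 1)|)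
          + ∑' k : (Set.Ici (M + 1)), |b k - b ((k : ℤ) - 1)|) := by
    rw [← tsum_univ (fun k : ℤ => |b k - b (k - 1)|), huniv,
      Summable.tsum_union_disjoint hdisj1 (hvar.subtype _) (hvar.subtype _),
      Summable.tsum_union_disjoint hdisj2 (hvar.subtype _) (hvar.subtype _)]
  rw [hLHS2, hRHS, hmid2]
  linarith

/-- If `b = (b_j)` is a nonnegative sequence of summable variation
converging to `0` at `±∞`, then the Fourier multiplier `M_b` satisfies
`‖M_b f‖_p ≤ (C_p/2) var(b) ‖f‖_p` for every trigonometric polynomial `f`, where `C_p`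
uniformly bounds the partial-sum projections on `L^p(𝕋)`. -/
theorem stmt6 (p : ℝ≥0∞) (hp : 1 < p) (hp' : p ≠ ⊤)
    (Cp : ℝ) (hCp : 0 < Cp)
    (hproj : ∀ i j : ℤ, i ≤ j → ∀ (s : Finset ℤ) (a : ℤ → ℂ),
      eLpNorm (fun x : AddCircle (1 : ℝ) =>
          ∑ l ∈ s ∩ Finset.Icc i j, a l * fourier l x) p volume
        ≤ ENNReal.ofReal Cp *
          eLpNorm (fun x : AddCircle (1 : ℝ) => ∑ l ∈ s, a l * fourier l x) p volume)
    (b : ℤ → ℝ) (hb : ∀ j, 0 ≤ b j)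
    (hvar : Summable fun j : ℤ => |b j - b (j - 1)|)
    (hlim : Filter.Tendsto b Filter.cofinite (nhds 0)) :
    ∀ (s : Finset ℤ) (a : ℤ → ℂ),
      eLpNorm (fun x : AddCircle (1 : ℝ) =>
          ∑ j ∈ s, (b j : ℂ) * a j * fourier j x) p volume
        ≤ ENNReal.ofReal ((Cp / 2) * ∑' j : ℤ, |b j - b (j - 1)|) *
          eLpNorm (fun x : AddCircle (1 : ℝ) => ∑ j ∈ s, a j * fourier j x) p volume := by
  intro s a
  classical
  have hp1 : 1 ≤ p := le_of_lt hp
  have hbot : Tendsto b atBot (nhds 0) :=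
    hlim.mono_left (by rw [Int.cofinite_eq]; exact le_sup_left)
  have htop : Tendsto b atTop (nhds 0) :=
    hlim.mono_left (by rw [Int.cofinite_eq]; exact le_sup_right)
  rcases Finset.eq_empty_or_nonempty s with rfl | hs
  · simp only [Finset.sum_empty]
    exact le_trans (le_of_eq eLpNorm_zero') zero_le
  set m : ℤ := s.min' hs with hm_def
  set M : ℤ := s.max' hs with hM_def
  have hmM : m ≤ M := s.min'_le _ (s.max'_mem hs)
  set b' : ℤ → ℝ := fun k => if k ∈ Finset.Icc m M then b k else 0 with hb'_def
  have hagree : ∀ j ∈ s, b' j = b j := fun j hj =>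
    if_pos (Finset.mem_Icc.2 ⟨s.min'_le j hj, s.le_max' j hj⟩)
  have hLHS : (fun x : AddCircle (1 : ℝ) => ∑ j ∈ s, (b j : ℂ) * a j * fourier j x)
      = fun x : AddCircle (1 : ℝ) => ∑ j ∈ s, (b' j : ℂ) * a j * fourier j x := by
    funext x
    exact (Finset.sum_congr rfl fun j hj => by rw [hagree j hj]).symm
  rw [hLHS]
  have hb'0 : ∀ k, 0 ≤ b' k := by
    intro k
    simp only [hb'_def]
    split
    · exact hb k
    · exact le_refl 0
  have hb'supp : ∀ k, b' k ≠ 0 → k ∈ Finset.Icc m M := by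
    intro k h
    by_contra hk
    apply h
    simp only [hb'_def]
    rw [if_neg hk]
  have hkey := key p hp1 Cp (le_of_lt hCp) hproj (Finset.Icc m M).card b' hb'0
    (Finset.Icc m M) hb'supp le_rfl s a
  refine hkey.trans ?_
  refine mul_le_mul_left (ENNReal.ofReal_le_ofReal ?_) _
  refine mul_le_mul_of_nonneg_left ?_ (by positivity)
  exact trunc_var b hb hvar hbot htop m M hmM
end

section
/- Let 0 < t′ < t < 1. There exists a constant C, depending only on t and t′, such that for every ε > 0 and every trigonometric polynomial f = ∑_j a_j φ_j, ‖∑_j (1+j²)^{(t′−t)/2} (1 − e^{−ε(1+j²)}) a_j φ_j‖_{L^p(𝕋)} ≤ C C_p ε^{(t−t′)/2} ‖f‖_{L^p(𝕋)}. -/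
open MeasureTheory
open scoped ENNReal

section Stmt9Aux

lemma stmt9_supBound {θ ε y : ℝ} (hθ0 : 0 < θ) (hθ1 : θ ≤ 1) (hε : 0 < ε) (hy : 1 ≤ y) :
    y ^ (-θ) * (1 - Real.exp (-(ε * y))) ≤ ε ^ θ := by
  have hy0 : 0 < y := lt_of_lt_of_le one_pos hy
  have hrp : (0:ℝ) < y ^ (-θ) := Real.rpow_pos_of_pos hy0 _
  rcases le_or_gt (ε * y) 1 with h | h
  · have h1 : 1 - Real.exp (-(ε * y)) ≤ ε * y := by
      have := Real.add_one_le_exp (-(ε * y)); linarith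
    have h2 : y ^ (-θ) * (1 - Real.exp (-(ε * y))) ≤ y ^ (-θ) * (ε * y) :=
      mul_le_mul_of_nonneg_left h1 hrp.le
    have h3 : y ^ (-θ) * (ε * y) = ε * y ^ (1 - θ) := by
      rw [show (1:ℝ) - θ = -θ + 1 by ring, Real.rpow_add hy0, Real.rpow_one]; ring
    have hyinv : y ≤ ε⁻¹ := by
      rw [show ε⁻¹ = 1/ε by ring, le_div_iff₀ hε]; linarith [mul_comm ε y]
    have h4 : y ^ (1 - θ) ≤ ε⁻¹ ^ (1 - θ) := Real.rpow_le_rpow hy0.le hyinv (by linarith)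
    have h5 : ε * ε⁻¹ ^ (1 - θ) = ε ^ θ := by
      rw [Real.inv_rpow hε.le, ← Real.rpow_neg hε.le]
      nth_rewrite 1 [← Real.rpow_one ε]
      rw [← Real.rpow_add hε]; norm_num
    calc y ^ (-θ) * (1 - Real.exp (-(ε * y))) ≤ y ^ (-θ) * (ε * y) := h2
      _ = ε * y ^ (1 - θ) := h3
      _ ≤ ε * ε⁻¹ ^ (1 - θ) := mul_le_mul_of_nonneg_left h4 hε.le
      _ = ε ^ θ := h5
  · have hyε : ε⁻¹ ≤ y := by
      rw [show ε⁻¹ = 1/ε by ring, div_le_iff₀ hε]; linarith [mul_comm ε y]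
    have h1 : y ^ (-θ) ≤ ε⁻¹ ^ (-θ) :=
      Real.rpow_le_rpow_of_nonpos (by positivity) hyε (by linarith)
    have h2 : ε⁻¹ ^ (-θ) = ε ^ θ := by
      rw [Real.inv_rpow hε.le, ← Real.rpow_neg hε.le, neg_neg]
    have h3 : 1 - Real.exp (-(ε * y)) ≤ 1 := by linarith [Real.exp_pos (-(ε * y))]
    calc y ^ (-θ) * (1 - Real.exp (-(ε * y))) ≤ y ^ (-θ) * 1 :=
          mul_le_mul_of_nonneg_left h3 hrp.le
      _ = y ^ (-θ) := mul_one _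
      _ ≤ ε⁻¹ ^ (-θ) := h1
      _ = ε ^ θ := h2

lemma stmt9_qdown {θ u v : ℝ} (hθ : 0 ≤ θ) (hu : 0 ≤ u) (huv : u ≤ v)
    (hv : 0 ≤ v - θ * (Real.exp v - 1)) : 0 ≤ u - θ * (Real.exp u - 1) := by
  rcases eq_or_lt_of_le hu with h0 | hu0
  · simp [← h0]
  · have hv0 : 0 < v := lt_of_lt_of_le hu0 huv
    set s := u / v with hs
    have hs0 : 0 ≤ s := by positivity
    have hs1 : s ≤ 1 := by rw [hs, div_le_one hv0]; exact huv
    have hconv := convexOn_exp.2 (Set.mem_univ (0:ℝ)) (Set.mem_univ v)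
      (by linarith : (0:ℝ) ≤ 1 - s) hs0 (by ring)
    have hsv : s * v = u := div_mul_cancel₀ u hv0.ne'
    simp only [smul_eq_mul, mul_zero, zero_add, Real.exp_zero, mul_one, hsv] at hconv
    have h1 : θ * (Real.exp u - 1) ≤ s * (θ * (Real.exp v - 1)) := by nlinarith
    have h2 : s * (θ * (Real.exp v - 1)) ≤ s * v := by nlinarith
    linarith [hsv]

lemma stmt9_qbig {θ : ℝ} (hθ0 : 0 < θ) :
    ∀ u : ℝ, 4 / θ + 1 ≤ u → u - θ * (Real.exp u - 1) < 0 := by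
  intro u hu
  have h4 : (0:ℝ) < 4 / θ := by positivity
  have hu0 : (0:ℝ) < u := by linarith
  have he : 1 + u / 2 ≤ Real.exp (u / 2) := by linarith [Real.add_one_le_exp (u / 2)]
  have he2 : (1 + u / 2) ^ 2 ≤ Real.exp u := by
    rw [show u = u/2 + u/2 by ring, Real.exp_add]
    have h0 : (0:ℝ) ≤ 1 + u/2 := by linarith
    nlinarith
  have hq : 1 + u + u ^ 2 / 4 ≤ Real.exp u := by nlinarith
  have hθu : 4 / θ + 1 ≤ u → 4 < θ * u := by
    intro h
    have : 4 / θ < u := by linarith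
    calc (4:ℝ) = θ * (4 / θ) := by field_simp
      _ < θ * u := by exact mul_lt_mul_of_pos_left this hθ0
  have h5 : 4 < θ * u := hθu hu
  nlinarith

lemma stmt9_qsign {θ : ℝ} (hθ0 : 0 < θ) :
    ∃ U : ℝ, 0 ≤ U ∧ (∀ u, 0 ≤ u → u < U → 0 ≤ u - θ * (Real.exp u - 1)) ∧
      (∀ u, U < u → u - θ * (Real.exp u - 1) ≤ 0) := by
  set T : Set ℝ := {u | 0 ≤ u ∧ u - θ * (Real.exp u - 1) < 0} with hT
  have hne : T.Nonempty := ⟨4 / θ + 1, ⟨by positivity, stmt9_qbig hθ0 _ le_rfl⟩⟩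
  have hbdd : BddBelow T := ⟨0, fun u hu => hu.1⟩
  refine ⟨sInf T, le_csInf hne (fun u hu => hu.1), ?_, ?_⟩
  · intro u hu0 huU
    by_contra hneg
    push_neg at hneg
    have : u ∈ T := ⟨hu0, by linarith⟩
    exact absurd (csInf_le hbdd this) (not_le.mpr huU)
  · intro u hUu
    obtain ⟨v, hvT, hvu⟩ := exists_lt_of_csInf_lt hne hUu
    by_contra hpos
    push_neg at hpos
    have := stmt9_qdown hθ0.le hvT.1 hvu.le hpos.le
    linarith [hvT.2]

lemma stmt9_hasDeriv {θ ε : ℝ} {y : ℝ} (hy : 0 < y) :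
    HasDerivAt (fun z : ℝ => z ^ (-θ) * (1 - Real.exp (-(ε * z))))
      (y ^ (-θ - 1) * Real.exp (-(ε * y)) * (ε * y - θ * (Real.exp (ε * y) - 1))) y := by
  have h1 : HasDerivAt (fun z : ℝ => z ^ (-θ)) (-θ * y ^ (-θ - 1)) y :=
    Real.hasDerivAt_rpow_const (Or.inl hy.ne')
  have h2 : HasDerivAt (fun z : ℝ => 1 - Real.exp (-(ε * z))) (Real.exp (-(ε * y)) * ε) y := by
    have ha : HasDerivAt (fun z : ℝ => -(ε * z)) (-ε) y := by
      simpa using ((hasDerivAt_id y).const_mul ε).fun_neg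
    have hb := (Real.hasDerivAt_exp (-(ε * y))).comp y ha
    simpa using (hb.const_sub 1)
  have h := h1.mul h2
  refine h.congr_deriv ?_; symm
  have hsplit : y ^ (-θ) = y ^ (-θ - 1) * y := by
    rw [Real.rpow_sub hy, Real.rpow_one]; field_simp
  have hee : Real.exp (-(ε * y)) * Real.exp (ε * y) = 1 := by
    rw [← Real.exp_add]; simp
  linear_combination (-(ε * Real.exp (-(ε * y)))) * hsplit +
    (-(y ^ (-θ - 1) * θ)) * hee

lemma stmt9_mono {θ ε U : ℝ} (hε : 0 < ε)
    (hq : ∀ u, 0 ≤ u → u < U → 0 ≤ u - θ * (Real.exp u - 1)) :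
    MonotoneOn (fun z : ℝ => z ^ (-θ) * (1 - Real.exp (-(ε * z))))
      (Set.Icc 1 (max (U / ε) 1)) := by
  apply monotoneOn_of_deriv_nonneg (convex_Icc _ _)
  · intro y hy
    have hy0 : 0 < y := lt_of_lt_of_le one_pos hy.1
    exact ((stmt9_hasDeriv (θ := θ) (ε := ε) hy0).differentiableAt).continuousAt.continuousWithinAt
  · intro y hy
    rw [interior_Icc] at hy
    have hy0 : 0 < y := lt_trans one_pos hy.1
    exact ((stmt9_hasDeriv (θ := θ) (ε := ε) hy0).differentiableAt).differentiableWithinAt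
  · intro y hy
    rw [interior_Icc] at hy
    have hy0 : 0 < y := lt_trans one_pos hy.1
    rw [(stmt9_hasDeriv (θ := θ) (ε := ε) hy0).deriv]
    have hyU : ε * y < U := by
      rcases le_or_gt (U / ε) 1 with h | h
      · exact absurd (hy.2.trans_le (max_le h le_rfl)) (not_lt.mpr hy.1.le)
      · have : y < U / ε := lt_of_lt_of_le hy.2 (le_of_eq (max_eq_left h.le))
        calc ε * y < ε * (U / ε) := mul_lt_mul_of_pos_left this hε
          _ = U := by field_simp
    have hq' := hq (ε * y) (by positivity) hyU
    have h1 : (0:ℝ) < y ^ (-θ - 1) := Real.rpow_pos_of_pos hy0 _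
    have h2 : (0:ℝ) < Real.exp (-(ε * y)) := Real.exp_pos _
    positivity

lemma stmt9_anti {θ ε U : ℝ} (hε : 0 < ε)
    (hq : ∀ u, U < u → u - θ * (Real.exp u - 1) ≤ 0) :
    AntitoneOn (fun z : ℝ => z ^ (-θ) * (1 - Real.exp (-(ε * z))))
      (Set.Ici (max (U / ε) 1)) := by
  apply antitoneOn_of_deriv_nonpos (convex_Ici _)
  · intro y hy
    have hy0 : 0 < y := lt_of_lt_of_le one_pos (le_trans (le_max_right _ _) hy)
    exact ((stmt9_hasDeriv (θ := θ) (ε := ε) hy0).differentiableAt).continuousAt.continuousWithinAt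
  · intro y hy
    rw [interior_Ici] at hy
    have hy0 : 0 < y := lt_of_le_of_lt (le_trans zero_le_one (le_max_right _ _)) hy
    exact ((stmt9_hasDeriv (θ := θ) (ε := ε) hy0).differentiableAt).differentiableWithinAt
  · intro y hy
    rw [interior_Ici] at hy
    have hy0 : 0 < y := lt_of_le_of_lt (le_trans zero_le_one (le_max_right _ _)) hy
    rw [(stmt9_hasDeriv (θ := θ) (ε := ε) hy0).deriv]
    have hyU : U < ε * y := by
      have h1 : U / ε < y := lt_of_le_of_lt (le_max_left _ _) hy
      calc U = ε * (U / ε) := by field_simp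
        _ < ε * y := mul_lt_mul_of_pos_left h1 hε
    have hq' := hq (ε * y) hyU
    have h1 : (0:ℝ) < y ^ (-θ - 1) := Real.rpow_pos_of_pos hy0 _
    have h2 : (0:ℝ) < Real.exp (-(ε * y)) := Real.exp_pos _
    exact mul_nonpos_of_nonneg_of_nonpos (by positivity) hq'

lemma stmt9_var (c : ℕ → ℝ) (M : ℝ) (N K : ℕ)
    (h0 : ∀ k, 0 ≤ c k) (hM : ∀ k, c k ≤ M)
    (hmono : ∀ k, k + 1 ≤ K → c k ≤ c (k + 1))
    (hanti : ∀ k, K + 1 ≤ k → c (k + 1) ≤ c k) :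
    ∑ k ∈ Finset.range N, |c (k + 1) - c k| ≤ 3 * M := by
  have hM0 : 0 ≤ M := le_trans (h0 0) (hM 0)
  rcases le_or_gt N K with hNK | hKN
  · have : ∀ k ∈ Finset.range N, |c (k + 1) - c k| = c (k + 1) - c k := by
      intro k hk
      rw [abs_of_nonneg]
      have := hmono k (le_trans (Finset.mem_range.mp hk) hNK)
      linarith
    rw [Finset.sum_congr rfl this, Finset.sum_range_sub]
    linarith [h0 0, hM N]
  · have hsplit : Finset.range N = Finset.range (K + 1) ∪ Finset.Ico (K + 1) N := by
      rw [Finset.range_eq_Ico, Finset.range_eq_Ico]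
      exact (Finset.Ico_union_Ico_eq_Ico (Nat.zero_le _) hKN).symm
    have hdisj : Disjoint (Finset.range (K + 1)) (Finset.Ico (K + 1) N) := by
      simp [Finset.disjoint_left, Finset.mem_range, Finset.mem_Ico]
      intro a ha h; omega
    rw [hsplit, Finset.sum_union hdisj]
    have hA : ∑ k ∈ Finset.range (K + 1), |c (k + 1) - c k| ≤ 2 * M := by
      rw [Finset.sum_range_succ]
      have h1 : ∀ k ∈ Finset.range K, |c (k + 1) - c k| = c (k + 1) - c k := by
        intro k hk
        rw [abs_of_nonneg]
        have := hmono k (Finset.mem_range.mp hk)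
        linarith
      rw [Finset.sum_congr rfl h1, Finset.sum_range_sub]
      have h2 : |c (K + 1) - c K| ≤ M := by
        rw [abs_sub_le_iff]
        constructor <;> [linarith [h0 K, hM (K+1)]; linarith [h0 (K+1), hM K]]
      linarith [h0 0, hM K]
    have hB : ∑ k ∈ Finset.Ico (K + 1) N, |c (k + 1) - c k| ≤ M := by
      have h1 : ∀ k ∈ Finset.Ico (K + 1) N, |c (k + 1) - c k| = c k - c (k + 1) := by
        intro k hk
        rw [abs_of_nonpos]
        · ring
        · have := hanti k (Finset.mem_Ico.mp hk).1; linarith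
      rw [Finset.sum_congr rfl h1]
      have h2 : ∑ k ∈ Finset.Ico (K + 1) N, (c k - c (k + 1))
          = ∑ k ∈ Finset.range (N - (K + 1)), (c (K + 1 + k) - c (K + 1 + k + 1)) := by
        rw [Finset.sum_Ico_eq_sum_range]
      rw [h2]
      have h3 : ∑ k ∈ Finset.range (N - (K + 1)), (c (K + 1 + k) - c (K + 1 + k + 1))
          = c (K + 1) - c (K + 1 + (N - (K + 1))) := by
        have := Finset.sum_range_sub (fun k => -c (K + 1 + k)) (N - (K + 1))
        simp only [neg_sub_neg] at this
        rw [← this]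
        apply Finset.sum_congr rfl
        intro k _
        ring_nf
      rw [h3]
      linarith [hM (K + 1), h0 (K + 1 + (N - (K + 1)))]
    linarith

lemma stmt9_tel (c : ℕ → ℂ) : ∀ (N m : ℕ), m ≤ N →
    ∑ r ∈ Finset.range N, (if m ≤ r then c r - c (r + 1) else 0) = c m - c N := by
  intro N
  induction N with
  | zero => intro m hm; simp [Nat.le_zero.mp hm]
  | succ n ih =>
    intro m hm
    rw [Finset.sum_range_succ]
    rcases le_or_gt m n with hmn | hmn
    · rw [ih m hmn, if_pos hmn]; ring
    · have hm' : m = n + 1 := le_antisymm hm hmn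
      subst hm'
      rw [if_neg (by omega), Finset.sum_eq_zero, zero_add, sub_self]
      intro r hr
      rw [if_neg (by simp at hr; omega)]

end Stmt9Aux

/-- Let `0 < t' < t < 1`. There is a constant `C = C(t,t')` such that
for every `ε > 0` and every trigonometric polynomial `f = ∑ a_j φ_j`,
`‖∑_j (1+j²)^{(t'−t)/2} (1 − e^{−ε(1+j²)}) a_j φ_j‖_p ≤ C C_p ε^{(t−t')/2} ‖f‖_p`. -/
theorem stmt9 (p : ℝ≥0∞) (hp : 1 < p) (hp' : p ≠ ⊤)
    (Cp : ℝ) (hCp : 0 < Cp)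
    (hproj : ∀ i j : ℤ, i ≤ j → ∀ (s : Finset ℤ) (a : ℤ → ℂ),
      eLpNorm (fun x : AddCircle (1 : ℝ) =>
          ∑ l ∈ s ∩ Finset.Icc i j, a l * fourier l x) p volume
        ≤ ENNReal.ofReal Cp *
          eLpNorm (fun x : AddCircle (1 : ℝ) => ∑ l ∈ s, a l * fourier l x) p volume)
    (t t' : ℝ) (ht'0 : 0 < t') (ht't : t' < t) (ht1 : t < 1) :
    ∃ C : ℝ, 0 < C ∧ ∀ ε : ℝ, 0 < ε → ∀ (s : Finset ℤ) (a : ℤ → ℂ),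
      eLpNorm (fun x : AddCircle (1 : ℝ) =>
          ∑ j ∈ s, (((1 + (j : ℝ) ^ 2) ^ ((t' - t) / 2) *
              (1 - Real.exp (-(ε * (1 + (j : ℝ) ^ 2)))) : ℝ) : ℂ) * a j * fourier j x)
          p volume
        ≤ ENNReal.ofReal (C * Cp * ε ^ ((t - t') / 2)) *
          eLpNorm (fun x : AddCircle (1 : ℝ) => ∑ j ∈ s, a j * fourier j x) p volume := by
  set θ : ℝ := (t - t') / 2 with hθdef
  have hθ0 : 0 < θ := by unfold θ; linarith
  have hθ1 : θ ≤ 1 := by unfold θ; linarith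
  obtain ⟨U, hU0, hqpos, hqneg⟩ := stmt9_qsign (θ := θ) hθ0
  refine ⟨4, by norm_num, ?_⟩
  intro ε hε s a
  set Y : ℝ := max (U / ε) 1 with hYdef
  have hY1 : 1 ≤ Y := le_max_right _ _
  -- the multiplier as a sequence indexed by ℕ
  set c : ℕ → ℝ := fun k => (1 + (k:ℝ) ^ 2) ^ (-θ) * (1 - Real.exp (-(ε * (1 + (k:ℝ) ^ 2))))
    with hcdef
  have hyk1 : ∀ k : ℕ, (1:ℝ) ≤ 1 + (k:ℝ) ^ 2 := by
    intro k; have := sq_nonneg (k:ℝ); linarith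
  have h0 : ∀ k, 0 ≤ c k := by
    intro k
    have h1 : Real.exp (-(ε * (1 + (k:ℝ) ^ 2))) ≤ 1 := by
      rw [Real.exp_le_one_iff]
      have := hyk1 k; nlinarith
    have h2 : (0:ℝ) ≤ (1 + (k:ℝ) ^ 2) ^ (-θ) :=
      (Real.rpow_pos_of_pos (by linarith [hyk1 k]) _).le
    have : (0:ℝ) ≤ 1 - Real.exp (-(ε * (1 + (k:ℝ) ^ 2))) := by linarith
    exact mul_nonneg h2 this
  have hM : ∀ k, c k ≤ ε ^ θ := fun k => stmt9_supBound hθ0 hθ1 hε (hyk1 k)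
  have hsq0 : (0:ℝ) ≤ Y - 1 := by linarith
  set K : ℕ := ⌊Real.sqrt (Y - 1)⌋₊ with hKdef
  have hmemI : ∀ m : ℕ, m ≤ K → (1 + (m:ℝ) ^ 2) ∈ Set.Icc (1:ℝ) Y := by
    intro m hm
    refine ⟨hyk1 m, ?_⟩
    have h1 : (m:ℝ) ≤ Real.sqrt (Y - 1) :=
      le_trans (Nat.cast_le.mpr hm) (Nat.floor_le (Real.sqrt_nonneg _))
    have h2 : (m:ℝ) ^ 2 ≤ Real.sqrt (Y - 1) ^ 2 :=
      pow_le_pow_left₀ (Nat.cast_nonneg m) h1 2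
    rw [Real.sq_sqrt hsq0] at h2
    linarith
  have hmemO : ∀ m : ℕ, K + 1 ≤ m → (1 + (m:ℝ) ^ 2) ∈ Set.Ici Y := by
    intro m hm
    have h1 : Real.sqrt (Y - 1) < (m:ℝ) := (Nat.floor_lt (Real.sqrt_nonneg _)).mp (by omega)
    have h2 : Y - 1 < (m:ℝ) ^ 2 := by
      have hm0 : (0:ℝ) < (m:ℝ) := lt_of_le_of_lt (Real.sqrt_nonneg _) h1
      rw [← Real.sq_sqrt hsq0]
      exact pow_lt_pow_left₀ h1 (Real.sqrt_nonneg _) (by norm_num)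
    simp only [Set.mem_Ici]; linarith
  have hmonoK : ∀ k, k + 1 ≤ K → c k ≤ c (k + 1) := by
    intro k hk
    have := stmt9_mono (θ := θ) (U := U) hε hqpos
      (hmemI k (by omega)) (hmemI (k+1) hk) (by push_cast; nlinarith [Nat.cast_nonneg (α := ℝ) k])
    simpa [hcdef] using this
  have hantiK : ∀ k, K + 1 ≤ k → c (k + 1) ≤ c k := by
    intro k hk
    have := stmt9_anti (θ := θ) (U := U) hε hqneg
      (hmemO k hk) (hmemO (k+1) (by omega)) (by push_cast; nlinarith [Nat.cast_nonneg (α := ℝ) k])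
    simpa [hcdef] using this
  set N : ℕ := s.sup (fun j => j.natAbs) with hNdef
  have hjN : ∀ j ∈ s, j.natAbs ≤ N := fun j hj => Finset.le_sup hj
  have hvar : ∑ k ∈ Finset.range N, |c (k + 1) - c k| ≤ 3 * ε ^ θ :=
    stmt9_var c (ε ^ θ) N K h0 hM hmonoK hantiK
  -- complex version of the multiplier
  set cc : ℕ → ℂ := fun k => ((c k : ℝ) : ℂ) with hccdef
  set T : ℕ → AddCircle (1:ℝ) → ℂ :=
    fun r => fun x => ∑ l ∈ s ∩ Finset.Icc (-(r:ℤ)) (r:ℤ), a l * fourier l x with hTdef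
  -- coefficient identification
  have hcoeff : ∀ j : ℤ, (((1 + (j : ℝ) ^ 2) ^ ((t' - t) / 2) *
      (1 - Real.exp (-(ε * (1 + (j : ℝ) ^ 2)))) : ℝ) : ℂ) = cc j.natAbs := by
    intro j
    have hnat : ((j.natAbs : ℕ) : ℝ) ^ 2 = (j : ℝ) ^ 2 := by
      rw [show ((j.natAbs : ℕ) : ℝ) = |(j : ℝ)| from by
        rw [← Int.cast_natCast (R := ℝ), Int.natCast_natAbs, Int.cast_abs]]
      exact sq_abs _
    have hexp : (t' - t) / 2 = -θ := by rw [hθdef]; ring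
    simp only [hccdef, hcdef, hnat, hexp]
  -- the key pointwise identity
  have key : (fun x : AddCircle (1:ℝ) =>
      ∑ j ∈ s, (((1 + (j : ℝ) ^ 2) ^ ((t' - t) / 2) *
        (1 - Real.exp (-(ε * (1 + (j : ℝ) ^ 2)))) : ℝ) : ℂ) * a j * fourier j x)
      = fun x => ∑ r ∈ Finset.range N, (cc r - cc (r + 1)) * T r x + cc N * T N x := by
    funext x
    have hTs : ∀ r : ℕ, T r x = ∑ j ∈ s, (if j.natAbs ≤ r then a j * fourier j x else 0) := by
      intro r
      have : s ∩ Finset.Icc (-(r:ℤ)) (r:ℤ) = s.filter (fun j => j.natAbs ≤ r) := by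
        ext j
        simp only [Finset.mem_inter, Finset.mem_Icc, Finset.mem_filter]
        constructor
        · rintro ⟨h1, h2, h3⟩; exact ⟨h1, by omega⟩
        · rintro ⟨h1, h2⟩; exact ⟨h1, by omega, by omega⟩
      rw [hTdef]; simp only []
      rw [this, Finset.sum_filter]
    have hTN : T N x = ∑ j ∈ s, a j * fourier j x := by
      rw [hTs N, Finset.sum_congr rfl]
      intro j hj
      rw [if_pos (hjN j hj)]
    calc ∑ j ∈ s, (((1 + (j : ℝ) ^ 2) ^ ((t' - t) / 2) *
            (1 - Real.exp (-(ε * (1 + (j : ℝ) ^ 2)))) : ℝ) : ℂ) * a j * fourier j x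
        = ∑ j ∈ s, cc j.natAbs * (a j * fourier j x) := by
          refine Finset.sum_congr rfl fun j _ => ?_
          rw [hcoeff j, mul_assoc]
      _ = ∑ j ∈ s, ((cc j.natAbs - cc N) * (a j * fourier j x)
            + cc N * (a j * fourier j x)) := by
          refine Finset.sum_congr rfl fun j _ => ?_; ring
      _ = ∑ j ∈ s, (cc j.natAbs - cc N) * (a j * fourier j x)
            + cc N * ∑ j ∈ s, a j * fourier j x := by
          rw [Finset.sum_add_distrib, Finset.mul_sum]
      _ = ∑ r ∈ Finset.range N, (cc r - cc (r + 1)) * T r x + cc N * T N x := by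
          rw [hTN]
          congr 1
          calc ∑ j ∈ s, (cc j.natAbs - cc N) * (a j * fourier j x)
              = ∑ j ∈ s, (∑ r ∈ Finset.range N,
                  (if j.natAbs ≤ r then cc r - cc (r + 1) else 0)) * (a j * fourier j x) := by
                refine Finset.sum_congr rfl fun j hj => ?_
                rw [stmt9_tel cc N j.natAbs (hjN j hj)]
            _ = ∑ j ∈ s, ∑ r ∈ Finset.range N,
                  (if j.natAbs ≤ r then (cc r - cc (r + 1)) * (a j * fourier j x) else 0) := by
                refine Finset.sum_congr rfl fun j _ => ?_
                rw [Finset.sum_mul]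
                refine Finset.sum_congr rfl fun r _ => ?_
                rw [ite_mul, zero_mul]
            _ = ∑ r ∈ Finset.range N, ∑ j ∈ s,
                  (if j.natAbs ≤ r then (cc r - cc (r + 1)) * (a j * fourier j x) else 0) :=
                Finset.sum_comm
            _ = ∑ r ∈ Finset.range N, (cc r - cc (r + 1)) * T r x := by
                refine Finset.sum_congr rfl fun r _ => ?_
                rw [hTs r, Finset.mul_sum]
                refine Finset.sum_congr rfl fun j _ => ?_
                rw [mul_ite, mul_zero]
  -- now the norm estimate
  have hp1 : 1 ≤ p := hp.le
  have hcont : ∀ r : ℕ, Continuous (T r) := by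
    intro r
    exact continuous_finset_sum _ fun l _ => continuous_const.mul (fourier l).continuous
  have hTmeas : ∀ r : ℕ, AEStronglyMeasurable (T r) volume :=
    fun r => (hcont r).aestronglyMeasurable
  have hrle : ∀ r : ℕ, (-(r:ℤ)) ≤ (r:ℤ) := by intro r; omega
  set X : ℝ≥0∞ := eLpNorm (fun x : AddCircle (1:ℝ) => ∑ l ∈ s, a l * fourier l x) p volume
    with hXdef
  have hTle : ∀ r : ℕ, eLpNorm (T r) p volume ≤ ENNReal.ofReal Cp * X := by
    intro r
    exact hproj (-(r:ℤ)) (r:ℤ) (hrle r) s a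
  have hscale : ∀ (z : ℂ) (g : AddCircle (1:ℝ) → ℂ),
      eLpNorm (fun x => z * g x) p volume = (‖z‖₊ : ℝ≥0∞) * eLpNorm g p volume := by
    intro z g
    have : (fun x => z * g x) = z • g := by funext x; simp [smul_eq_mul]
    rw [this, eLpNorm_const_smul, enorm_eq_nnnorm]
  rw [key]
  have step1 : eLpNorm (fun x => ∑ r ∈ Finset.range N, (cc r - cc (r + 1)) * T r x
        + cc N * T N x) p volume
      ≤ eLpNorm (fun x => ∑ r ∈ Finset.range N, (cc r - cc (r + 1)) * T r x) p volume
        + eLpNorm (fun x => cc N * T N x) p volume := by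
    apply eLpNorm_add_le _ _ hp1
    · exact (continuous_finset_sum _ fun r _ =>
        continuous_const.mul (hcont r)).aestronglyMeasurable
    · exact (continuous_const.mul (hcont N)).aestronglyMeasurable
  have step2 : eLpNorm (fun x => ∑ r ∈ Finset.range N, (cc r - cc (r + 1)) * T r x) p volume
      ≤ ∑ r ∈ Finset.range N, eLpNorm (fun x => (cc r - cc (r + 1)) * T r x) p volume := by
    have hfe : (fun x => ∑ r ∈ Finset.range N, (cc r - cc (r + 1)) * T r x)
        = ∑ r ∈ Finset.range N, (fun x => (cc r - cc (r + 1)) * T r x) := by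
      funext x; simp
    rw [hfe]
    exact eLpNorm_sum_le (fun r _ =>
      (continuous_const.mul (hcont r)).aestronglyMeasurable) hp1
  have hnn : ∀ r : ℕ, (‖cc r - cc (r + 1)‖₊ : ℝ≥0∞) = ENNReal.ofReal (|c (r + 1) - c r|) := by
    intro r
    have h1 : cc r - cc (r + 1) = ((c r - c (r + 1) : ℝ) : ℂ) := by push_cast; ring
    rw [h1]
    rw [← enorm_eq_nnnorm, ← ofReal_norm]
    congr 1
    rw [Complex.norm_real, Real.norm_eq_abs, abs_sub_comm]
  have hnnN : (‖cc N‖₊ : ℝ≥0∞) = ENNReal.ofReal (c N) := by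
    rw [← enorm_eq_nnnorm, ← ofReal_norm]
    congr 1
    rw [Complex.norm_real, Real.norm_eq_abs, abs_of_nonneg (h0 N)]
  have step3 : ∑ r ∈ Finset.range N, eLpNorm (fun x => (cc r - cc (r + 1)) * T r x) p volume
        + eLpNorm (fun x => cc N * T N x) p volume
      ≤ (∑ r ∈ Finset.range N, ENNReal.ofReal (|c (r + 1) - c r|) + ENNReal.ofReal (c N))
        * (ENNReal.ofReal Cp * X) := by
    rw [add_mul, Finset.sum_mul]
    apply add_le_add
    · apply Finset.sum_le_sum
      intro r _
      rw [hscale, hnn r]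
      exact mul_le_mul_right (hTle r) _
    · rw [hscale, hnnN]
      exact mul_le_mul_right (hTle N) _
  have step4 : (∑ r ∈ Finset.range N, ENNReal.ofReal (|c (r + 1) - c r|)
        + ENNReal.ofReal (c N))
      ≤ ENNReal.ofReal (4 * ε ^ θ) := by
    rw [← ENNReal.ofReal_sum_of_nonneg (fun r _ => abs_nonneg _),
      ← ENNReal.ofReal_add (Finset.sum_nonneg fun r _ => abs_nonneg _) (h0 N)]
    apply ENNReal.ofReal_le_ofReal
    have := hM N
    linarith
  calc eLpNorm (fun x => ∑ r ∈ Finset.range N, (cc r - cc (r + 1)) * T r x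
        + cc N * T N x) p volume
      ≤ ∑ r ∈ Finset.range N, eLpNorm (fun x => (cc r - cc (r + 1)) * T r x) p volume
        + eLpNorm (fun x => cc N * T N x) p volume := le_trans step1 (by
          exact add_le_add_left step2 _)
    _ ≤ (∑ r ∈ Finset.range N, ENNReal.ofReal (|c (r + 1) - c r|) + ENNReal.ofReal (c N))
        * (ENNReal.ofReal Cp * X) := step3
    _ ≤ ENNReal.ofReal (4 * ε ^ θ) * (ENNReal.ofReal Cp * X) :=
        mul_le_mul_left step4 _
    _ = ENNReal.ofReal (4 * Cp * ε ^ ((t - t') / 2)) * X := by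
        rw [← mul_assoc, ← ENNReal.ofReal_mul (by positivity)]
        congr 2
        rw [← hθdef]; ring
end

section
/- Let p > 1 and 0 < t < 1. There exists a constant C, depending only on p and t, such that for every k ≥ 1 and every f ∈ L^p(ℝ), ∫_0^1 |E_k f(x) − f(x)|^p dx ≤ C k^{−pt} ∫_0^1 (∫_{2/k}^{3/k} H_r f(x) dr)^{p/2} dx. -/
open MeasureTheory
open scoped ENNReal

/-- The conditional expectation `E_k` with respect to the partition of `ℝ` into the
intervals `[j/k, (j+1)/k)`, `j ∈ ℤ`. -/
noncomputable def Ek (k : ℕ) (f : ℝ → ℝ) (x : ℝ) : ℝ :=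
  (k : ℝ) * ∫ s in Set.Ico ((⌊x * k⌋ : ℝ) / k) (((⌊x * k⌋ : ℝ) + 1) / k), f s

/-- `H_r f(x) = r^{−1−2t} (∫_{−1}^{1} |f(x+ry) − f(x)| dy)²` (as an `ℝ≥0∞`-valued
quantity, so that no integrability assumptions are needed). -/
noncomputable def HrL (t : ℝ) (f : ℝ → ℝ) (x r : ℝ) : ℝ≥0∞ :=
  ENNReal.ofReal (r ^ (-(1 + 2 * t))) *
    (∫⁻ y in Set.Icc (-1 : ℝ) 1, ENNReal.ofReal |f (x + r * y) - f x|) ^ 2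

lemma lint_affine (g : ℝ → ℝ≥0∞) (hg : Measurable g) (c r : ℝ) (hr : 0 < r) :
    ∫⁻ y in Set.Icc (-1 : ℝ) 1, g (c + r * y) =
      ENNReal.ofReal r⁻¹ * ∫⁻ s in Set.Icc (c - r) (c + r), g s := by
  have hr0 : r ≠ 0 := ne_of_gt hr
  have hφ : Measurable (fun y : ℝ => c + r * y) :=
    (measurable_const_mul r).const_add c
  have hpre : (fun y : ℝ => c + r * y) ⁻¹' Set.Icc (c - r) (c + r) = Set.Icc (-1 : ℝ) 1 := by
    ext y
    simp only [Set.mem_preimage, Set.mem_Icc]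
    constructor
    · rintro ⟨h1, h2⟩
      constructor <;> nlinarith
    · rintro ⟨h1, h2⟩
      constructor <;> nlinarith
  have hmap : Measure.map (fun y : ℝ => c + r * y) volume
      = ENNReal.ofReal r⁻¹ • (volume : Measure ℝ) := by
    have hcomp : (fun y : ℝ => c + r * y) = (fun z : ℝ => c + z) ∘ (fun y : ℝ => r * y) := rfl
    rw [hcomp, ← Measure.map_map (measurable_const_add c) (measurable_const_mul r),
      Real.map_volume_mul_left hr0, Measure.map_smul,
      (measurePreserving_add_left volume c).map_eq, abs_of_pos (inv_pos.mpr hr)]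
  calc ∫⁻ y in Set.Icc (-1 : ℝ) 1, g (c + r * y)
      = ∫⁻ s, g s ∂(Measure.map (fun y : ℝ => c + r * y)
          (volume.restrict ((fun y : ℝ => c + r * y) ⁻¹' Set.Icc (c - r) (c + r)))) := by
        rw [lintegral_map hg hφ, hpre]
    _ = ∫⁻ s, g s ∂((Measure.map (fun y : ℝ => c + r * y) volume).restrict
          (Set.Icc (c - r) (c + r))) := by
        rw [Measure.restrict_map hφ measurableSet_Icc]
    _ = ENNReal.ofReal r⁻¹ * ∫⁻ s in Set.Icc (c - r) (c + r), g s := by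
        rw [hmap, Measure.restrict_smul, lintegral_smul_measure, smul_eq_mul]


/-- For `p > 1`, `0 < t < 1`, there is `C = C(p,t)` such that for all
`k ≥ 1` and `f ∈ L^p(ℝ)`,
`∫_0^1 |E_k f − f|^p ≤ C k^{−pt} ∫_0^1 (∫_{2/k}^{3/k} H_r f(x) dr)^{p/2} dx`. -/
theorem stmt11 (p t : ℝ) (hp : 1 < p) (ht0 : 0 < t) (ht1 : t < 1) :
    ∃ C : ℝ, 0 < C ∧ ∀ k : ℕ, 1 ≤ k → ∀ f : ℝ → ℝ, Measurable f →
      MemLp f (ENNReal.ofReal p) volume →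
      (∫⁻ x in Set.Ioc (0 : ℝ) 1, ENNReal.ofReal |Ek k f x - f x| ^ p)
        ≤ ENNReal.ofReal (C * (k : ℝ) ^ (-(p * t))) *
          ∫⁻ x in Set.Ioc (0 : ℝ) 1,
            (∫⁻ r in Set.Icc (2 / (k : ℝ)) (3 / (k : ℝ)), HrL t f x r) ^ (p / 2) := by
  have hp0 : (0:ℝ) ≤ p := by linarith
  have hq0 : (0:ℝ) ≤ p / 2 := by linarith
  have h3 : (0:ℝ) < 3 := by norm_num
  set z : ℝ := 3 + 2 * t with hz
  set q : ℝ := p / 2 with hq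
  refine ⟨3 ^ (z * q), Real.rpow_pos_of_pos h3 _, ?_⟩
  set C : ℝ := 3 ^ (z * q) with hC
  intro k hk f hf hfp
  set kR : ℝ := (k : ℝ) with hkR
  have hk1 : (1:ℝ) ≤ kR := by rw [hkR]; exact_mod_cast hk
  have hk0 : (0:ℝ) < kR := by linarith
  have hk0' : kR ≠ 0 := ne_of_gt hk0
  -- key pointwise bound
  have key : ∀ x : ℝ,
      ENNReal.ofReal |Ek k f x - f x| ^ p
        ≤ ENNReal.ofReal (C * kR ^ (-(p * t))) *
          (∫⁻ r in Set.Icc (2 / kR) (3 / kR), HrL t f x r) ^ (p / 2) := by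
    intro x
    set a : ℝ := (⌊x * kR⌋ : ℝ) / kR with ha
    set b : ℝ := ((⌊x * kR⌋ : ℝ) + 1) / kR with hb
    have hba : b - a = 1 / kR := by
      rw [ha, hb, div_sub_div_same]; ring_nf
    have hax : a ≤ x := by
      rw [ha, div_le_iff₀ hk0]
      exact Int.floor_le _
    have hxb : x < b := by
      rw [hb, lt_div_iff₀ hk0]
      exact Int.lt_floor_add_one _
    have h1k : (0:ℝ) < 1 / kR := by positivity
    set J : ℝ≥0∞ := ∫⁻ s in Set.Ico a b, ENNReal.ofReal |f s - f x| with hJ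
    haveI : IsFiniteMeasure (volume.restrict (Set.Ico a b)) := by
      constructor
      rw [Measure.restrict_apply_univ, Real.volume_Ico]
      exact ENNReal.ofReal_lt_top
    have hint : Integrable f (volume.restrict (Set.Ico a b)) :=
      (hfp.restrict _).integrable (ENNReal.one_le_ofReal.mpr hp.le)
    have hgint : Integrable (fun s => f s - f x) (volume.restrict (Set.Ico a b)) :=
      hint.sub (integrable_const _)
    -- step 1
    have hEk0 : Ek k f x = kR * ∫ s in Set.Ico a b, f s := by
      rw [Ek, ha, hb, hkR]
    have hEk : Ek k f x - f x = kR * ∫ s in Set.Ico a b, (f s - f x) := by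
      rw [hEk0, integral_sub hint (integrable_const _), integral_const, measureReal_def,
        Measure.restrict_apply_univ, Real.volume_Ico, hba,
        ENNReal.toReal_ofReal h1k.le, smul_eq_mul]
      field_simp
    have hDJ : ENNReal.ofReal |Ek k f x - f x| ≤ ENNReal.ofReal kR * J := by
      rw [hEk, abs_mul, abs_of_pos hk0, ENNReal.ofReal_mul hk0.le]
      refine mul_le_mul_right ?_ _
      calc ENNReal.ofReal |∫ s in Set.Ico a b, (f s - f x)|
          ≤ ENNReal.ofReal (∫ s in Set.Ico a b, |f s - f x|) := by
            apply ENNReal.ofReal_le_ofReal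
            simpa [Real.norm_eq_abs] using norm_integral_le_integral_norm
              (μ := volume.restrict (Set.Ico a b)) (fun s => f s - f x)
        _ = J := by
            rw [hJ, ofReal_integral_eq_lintegral_ofReal hgint.abs
              (Filter.Eventually.of_forall (fun s => abs_nonneg _))]
    -- step 2
    have hr_bound : ∀ r ∈ Set.Icc (2 / kR) (3 / kR),
        ENNReal.ofReal ((3 / kR) ^ (-z)) * J ^ 2 ≤ HrL t f x r := by
      rintro r ⟨hr2, hr3⟩
      have hrpos : 0 < r := lt_of_lt_of_le (by positivity) hr2
      have hr0 : r ≠ 0 := ne_of_gt hrpos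
      have h12 : (1:ℝ) / kR ≤ 2 / kR := by
        apply div_le_div_of_nonneg_right
        · norm_num
        · exact hk0.le
      have hsub : Set.Ico a b ⊆ Set.Icc (x - r) (x + r) := by
        intro s hs
        obtain ⟨hs1, hs2⟩ := hs
        exact Set.mem_Icc.mpr ⟨by linarith, by linarith⟩
      have hJr : J ≤ ∫⁻ s in Set.Icc (x - r) (x + r), ENNReal.ofReal |f s - f x| :=
        lintegral_mono_set hsub
      set AL : ℝ≥0∞ := ∫⁻ y in Set.Icc (-1:ℝ) 1, ENNReal.ofReal |f (x + r * y) - f x|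
        with hALdef
      have hAL : AL = ENNReal.ofReal r⁻¹ *
          ∫⁻ s in Set.Icc (x - r) (x + r), ENNReal.ofReal |f s - f x| :=
        lint_affine (fun s => ENNReal.ofReal |f s - f x|)
          ((hf.sub measurable_const).abs.ennreal_ofReal) x r hrpos
      have hrA : J ≤ ENNReal.ofReal r * AL := by
        rw [hAL, ← mul_assoc, ← ENNReal.ofReal_mul hrpos.le, mul_inv_cancel₀ hr0,
          ENNReal.ofReal_one, one_mul]
        exact hJr
      have hJ2 : J ^ 2 ≤ ENNReal.ofReal (r ^ (2:ℕ)) * AL ^ 2 := by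
        calc J ^ 2 ≤ (ENNReal.ofReal r * AL) ^ 2 := pow_le_pow_left' hrA 2
          _ = _ := by rw [mul_pow, ENNReal.ofReal_pow hrpos.le]
      have hrz : r ^ (-z) * r ^ (2:ℕ) = r ^ (-(1 + 2*t)) := by
        rw [← Real.rpow_natCast r 2, ← Real.rpow_add hrpos]
        congr 1
        rw [hz]; push_cast; ring
      have h3r : (3 / kR) ^ (-z) ≤ r ^ (-z) :=
        Real.rpow_le_rpow_of_nonpos hrpos hr3 (by rw [hz]; linarith)
      calc ENNReal.ofReal ((3 / kR) ^ (-z)) * J ^ 2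
          ≤ ENNReal.ofReal (r ^ (-z)) * (ENNReal.ofReal (r ^ (2:ℕ)) * AL ^ 2) :=
            mul_le_mul' (ENNReal.ofReal_le_ofReal h3r) hJ2
        _ = ENNReal.ofReal (r ^ (-z) * r ^ (2:ℕ)) * AL ^ 2 := by
            rw [← mul_assoc, ← ENNReal.ofReal_mul (Real.rpow_nonneg hrpos.le _)]
        _ = HrL t f x r := by
            rw [hrz, HrL, ← hALdef]
    -- integrate over r
    set G : ℝ≥0∞ := ∫⁻ r in Set.Icc (2 / kR) (3 / kR), HrL t f x r with hG
    set βk : ℝ := (3 / kR) ^ (-z) * (1 / kR) with hβk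
    have hβkpos : 0 < βk :=
      mul_pos (Real.rpow_pos_of_pos (div_pos h3 hk0) _) h1k
    have hγpos : 0 < βk ^ q := Real.rpow_pos_of_pos hβkpos q
    have hGlower : ENNReal.ofReal βk * J ^ 2 ≤ G := by
      have hvol : volume (Set.Icc (2 / kR) (3 / kR)) = ENNReal.ofReal (1 / kR) := by
        rw [Real.volume_Icc, div_sub_div_same]
        norm_num
      calc ENNReal.ofReal βk * J ^ 2
          = (ENNReal.ofReal ((3 / kR) ^ (-z)) * J ^ 2) * ENNReal.ofReal (1 / kR) := by
            rw [hβk, ENNReal.ofReal_mul (Real.rpow_nonneg (div_pos h3 hk0).le _)]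
            ring
        _ = ∫⁻ _ in Set.Icc (2 / kR) (3 / kR),
              (ENNReal.ofReal ((3 / kR) ^ (-z)) * J ^ 2) := by
            rw [setLIntegral_const, hvol]
        _ ≤ G := setLIntegral_mono' measurableSet_Icc hr_bound
    have hGp : ENNReal.ofReal (βk ^ q) * J ^ p ≤ G ^ q := by
      have h := ENNReal.rpow_le_rpow hGlower hq0
      rw [ENNReal.mul_rpow_of_nonneg _ _ hq0, ← ENNReal.rpow_natCast J 2,
        ← ENNReal.rpow_mul, ENNReal.ofReal_rpow_of_pos hβkpos] at h
      have h2q : ((2:ℕ):ℝ) * q = p := by rw [hq]; push_cast; ring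
      rwa [h2q] at h
    -- combine
    have h1 : ENNReal.ofReal |Ek k f x - f x| ^ p ≤ ENNReal.ofReal (kR ^ p) * J ^ p := by
      calc ENNReal.ofReal |Ek k f x - f x| ^ p
          ≤ (ENNReal.ofReal kR * J) ^ p := ENNReal.rpow_le_rpow hDJ hp0
        _ = _ := by rw [ENNReal.mul_rpow_of_nonneg _ _ hp0, ENNReal.ofReal_rpow_of_pos hk0]
    have h2 : J ^ p ≤ (ENNReal.ofReal (βk ^ q))⁻¹ * G ^ q := by
      have h := mul_le_mul_right hGp (ENNReal.ofReal (βk ^ q))⁻¹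
      rwa [← mul_assoc, ENNReal.inv_mul_cancel (ENNReal.ofReal_pos.mpr hγpos).ne'
        ENNReal.ofReal_ne_top, one_mul] at h
    have hscal : ENNReal.ofReal (kR ^ p) * (ENNReal.ofReal (βk ^ q))⁻¹
        = ENNReal.ofReal (C * kR ^ (-(p * t))) := by
      rw [← ENNReal.ofReal_inv_of_pos hγpos,
        ← ENNReal.ofReal_mul (Real.rpow_nonneg hk0.le _)]
      congr 1
      have eβ : βk = 3 ^ (-z) * kR ^ (z - 1) := by
        have e1 : (3 / kR) ^ (-z) = 3 ^ (-z) / kR ^ (-z) := Real.div_rpow h3.le hk0.le (-z)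
        have e2 : kR ^ (-z) = (kR ^ z)⁻¹ := Real.rpow_neg hk0.le z
        have e3 : kR ^ (z - 1) = kR ^ z * kR⁻¹ := by
          rw [← Real.rpow_neg_one kR, ← Real.rpow_add hk0]
          ring_nf
        rw [hβk, e1, e2, e3]
        field_simp
      have eγ : βk ^ q = 3 ^ (-z * q) * kR ^ ((z - 1) * q) := by
        rw [eβ, Real.mul_rpow (Real.rpow_nonneg h3.le _) (Real.rpow_nonneg hk0.le _),
          ← Real.rpow_mul h3.le, ← Real.rpow_mul hk0.le]
      have eA : -(-z * q) = z * q := by ring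
      have eB : p + -((z - 1) * q) = -(p * t) := by rw [hz, hq]; ring
      rw [eγ, mul_inv, ← Real.rpow_neg h3.le, ← Real.rpow_neg hk0.le,
        mul_left_comm, ← Real.rpow_add hk0, eA, eB, hC]
    calc ENNReal.ofReal |Ek k f x - f x| ^ p
        ≤ ENNReal.ofReal (kR ^ p) * ((ENNReal.ofReal (βk ^ q))⁻¹ * G ^ q) :=
          le_trans h1 (mul_le_mul_right h2 _)
      _ = (ENNReal.ofReal (kR ^ p) * (ENNReal.ofReal (βk ^ q))⁻¹) * G ^ q := by
          rw [mul_assoc]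
      _ = ENNReal.ofReal (C * kR ^ (-(p * t))) * G ^ (p / 2) := by
          rw [hscal, hq]
  calc (∫⁻ x in Set.Ioc (0 : ℝ) 1, ENNReal.ofReal |Ek k f x - f x| ^ p)
      ≤ ∫⁻ x in Set.Ioc (0 : ℝ) 1, ENNReal.ofReal (C * kR ^ (-(p * t))) *
          (∫⁻ r in Set.Icc (2 / kR) (3 / kR), HrL t f x r) ^ (p / 2) :=
        lintegral_mono fun x => key x
    _ = _ := lintegral_const_mul' _ _ ENNReal.ofReal_ne_top
end

section
/- For every k ≥ 1, every r ≥ 1/(2k), every locally integrable f: ℝ → ℝ, and every x ∈ ℝ, one has ∫_{−1}^{1} |E_k f(x+ry) − f(x)| dy ≤ 3 ∫_{−1}^{1} |f(x+(r+1/k)y) − f(x)| dy. -/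
open MeasureTheory
open scoped ENNReal

lemma floorIco {k : ℝ} (hk : 0 < k) (m : ℤ) (s : ℝ) :
    s ∈ Set.Ico ((m:ℝ)/k) (((m:ℝ)+1)/k) ↔ ⌊s * k⌋ = m := by
  rw [Set.mem_Ico, Int.floor_eq_iff, div_le_iff₀ hk, lt_div_iff₀ hk]

lemma EkBound (k : ℕ) (hk : 1 ≤ k) (f : ℝ → ℝ) (hf : LocallyIntegrable f volume)
    (v t : ℝ) :
    ENNReal.ofReal |Ek k f t - v| ≤
      ENNReal.ofReal (k:ℝ) * ∫⁻ s in Set.Ico ((⌊t * k⌋ : ℝ) / k) (((⌊t * k⌋ : ℝ) + 1) / k),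
        ENNReal.ofReal |f s - v| := by
  have hk0 : (0:ℝ) < k := by exact_mod_cast Nat.pos_of_ne_zero (by omega)
  set a := (⌊t * (k:ℝ)⌋ : ℝ) / k with ha
  set b := ((⌊t * (k:ℝ)⌋ : ℝ) + 1) / k with hb
  have hba : b - a = 1/k := by rw [ha, hb]; field_simp; ring
  have hvol : volume (Set.Ico a b) = ENNReal.ofReal (1/k) := by
    rw [Real.volume_Ico, hba]
  have hint : IntegrableOn f (Set.Ico a b) volume :=
    (hf.integrableOn_isCompact isCompact_Icc).mono_set Set.Ico_subset_Icc_self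
  have hconst : IntegrableOn (fun _ : ℝ => v) (Set.Ico a b) volume := by
    apply (integrableOn_const_iff (C := v)).mpr
    right; rw [hvol]; exact ENNReal.ofReal_lt_top
  have hint2 : IntegrableOn (fun s => f s - v) (Set.Ico a b) volume := hint.sub hconst
  have key : Ek k f t - v = (k:ℝ) * ∫ s in Set.Ico a b, (f s - v) := by
    rw [integral_sub hint hconst, setIntegral_const, measureReal_def, hvol,
        ENNReal.toReal_ofReal (by positivity)]
    unfold Ek
    rw [smul_eq_mul, ← ha, ← hb]
    field_simp
  calc ENNReal.ofReal |Ek k f t - v|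
      = ENNReal.ofReal ((k:ℝ) * |∫ s in Set.Ico a b, (f s - v)|) := by
        rw [key, abs_mul, abs_of_nonneg hk0.le]
    _ ≤ ENNReal.ofReal ((k:ℝ) * ∫ s in Set.Ico a b, |f s - v|) := by
        apply ENNReal.ofReal_le_ofReal
        apply mul_le_mul_of_nonneg_left _ hk0.le
        simpa [Real.norm_eq_abs] using
          norm_integral_le_integral_norm (μ := volume.restrict (Set.Ico a b))
            (fun s => f s - v)
    _ = ENNReal.ofReal (k:ℝ) * ENNReal.ofReal (∫ s in Set.Ico a b, |f s - v|) :=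
        ENNReal.ofReal_mul hk0.le
    _ ≤ _ := by
        refine mul_le_mul_right (le_of_eq ?_) _
        have h1 := ofReal_integral_norm_eq_lintegral_enorm hint2
        simp only [Real.norm_eq_abs] at h1
        rw [h1]
        apply lintegral_congr
        intro s
        rw [Real.enorm_eq_ofReal_abs]

/-- For every `k ≥ 1`, `r ≥ 1/(2k)`, locally integrable `f` and every
`x`, `∫_{−1}^{1} |E_k f(x+ry) − f(x)| dy ≤ 3 ∫_{−1}^{1} |f(x+(r+1/k)y) − f(x)| dy`. -/
theorem stmt12 (k : ℕ) (hk : 1 ≤ k) (r : ℝ) (hr : 1 / (2 * (k : ℝ)) ≤ r)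
    (f : ℝ → ℝ) (hf : LocallyIntegrable f volume) (x : ℝ) :
    (∫⁻ y in Set.Icc (-1 : ℝ) 1, ENNReal.ofReal |Ek k f (x + r * y) - f x|)
      ≤ 3 * ∫⁻ y in Set.Icc (-1 : ℝ) 1,
          ENNReal.ofReal |f (x + (r + 1 / (k : ℝ)) * y) - f x| := by
  have hk0 : (0:ℝ) < k := by exact_mod_cast Nat.pos_of_ne_zero (by omega)
  have hr0 : 0 < r := lt_of_lt_of_le (by positivity) hr
  set c : ℝ := r + 1 / k with hc_def
  have hc : 0 < c := by positivity
  obtain ⟨F, hFm, hfF⟩ : ∃ F, StronglyMeasurable F ∧ f =ᵐ[volume] F :=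
    ⟨hf.aestronglyMeasurable.mk f, hf.aestronglyMeasurable.stronglyMeasurable_mk,
      hf.aestronglyMeasurable.ae_eq_mk⟩
  set g : ℝ → ℝ≥0∞ := fun s => ENNReal.ofReal |F s - f x| with hg_def
  have hgm : Measurable g := (hFm.measurable.sub measurable_const).abs.ennreal_ofReal
  set C : ℝ≥0∞ := ENNReal.ofReal (1/((k:ℝ)*r)) with hC_def
  -- the product set
  set S : Set (ℝ × ℝ) := {p : ℝ × ℝ | ⌊p.2 * (k:ℝ)⌋ = ⌊(x + r * p.1) * (k:ℝ)⌋} with hS_def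
  have hSm : MeasurableSet S := by
    have h1 : Measurable fun p : ℝ × ℝ => ⌊p.2 * (k:ℝ)⌋ :=
      Int.measurable_floor.comp (measurable_snd.mul_const _)
    have h2 : Measurable fun p : ℝ × ℝ => ⌊(x + r * p.1) * (k:ℝ)⌋ :=
      Int.measurable_floor.comp ((measurable_fst.const_mul r).const_add x |>.mul_const _)
    exact measurableSet_eq_fun h1 h2
  -- Step 1 : pointwise bound for every y
  have step1 : ∀ y : ℝ, ENNReal.ofReal |Ek k f (x + r * y) - f x| ≤
      ENNReal.ofReal (k:ℝ) * ∫⁻ s, S.indicator (fun p => g p.2) (y, s) := by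
    intro y
    refine (EkBound k hk f hf (f x) (x + r * y)).trans ?_
    refine mul_le_mul_right (le_of_eq ?_) _
    have hset : Set.Ico ((⌊(x + r*y) * (k:ℝ)⌋ : ℝ) / k) (((⌊(x + r*y) * (k:ℝ)⌋ : ℝ) + 1) / k)
        = {s : ℝ | ⌊s * (k:ℝ)⌋ = ⌊(x + r*y) * (k:ℝ)⌋} := Set.ext fun s => floorIco hk0 _ s
    have hms : MeasurableSet {s : ℝ | ⌊s * (k:ℝ)⌋ = ⌊(x + r*y) * (k:ℝ)⌋} :=
      measurableSet_eq_fun (Int.measurable_floor.comp (measurable_id.mul_const _))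
        measurable_const
    calc ∫⁻ s in Set.Ico ((⌊(x + r*y) * (k:ℝ)⌋ : ℝ) / k) (((⌊(x + r*y) * (k:ℝ)⌋ : ℝ) + 1) / k),
            ENNReal.ofReal |f s - f x|
        = ∫⁻ s in Set.Ico ((⌊(x + r*y) * (k:ℝ)⌋ : ℝ) / k) (((⌊(x + r*y) * (k:ℝ)⌋ : ℝ) + 1) / k),
            g s := by
          apply lintegral_congr_ae
          exact ae_restrict_of_ae (hfF.mono fun s hs => by rw [hg_def]; simp [hs])
      _ = ∫⁻ s in {s : ℝ | ⌊s * (k:ℝ)⌋ = ⌊(x + r*y) * (k:ℝ)⌋}, g s := by rw [hset]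
      _ = ∫⁻ s, ({s : ℝ | ⌊s * (k:ℝ)⌋ = ⌊(x + r*y) * (k:ℝ)⌋}).indicator g s :=
          (lintegral_indicator hms g).symm
      _ = ∫⁻ s, S.indicator (fun p => g p.2) (y, s) := rfl
  -- Step 2 : Tonelli
  have hswap : (∫⁻ y in Set.Icc (-1:ℝ) 1, ∫⁻ s, S.indicator (fun p => g p.2) (y, s))
      = ∫⁻ s, ∫⁻ y in Set.Icc (-1:ℝ) 1, S.indicator (fun p => g p.2) (y, s) := by
    apply lintegral_lintegral_swap
    exact ((hgm.comp measurable_snd).indicator hSm).aemeasurable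
  -- Step 3 : inner bound for fixed s
  have step3 : ∀ s : ℝ, (∫⁻ y in Set.Icc (-1:ℝ) 1, S.indicator (fun p => g p.2) (y, s))
      ≤ g s * (Set.Ioo (x - c) (x + c)).indicator (fun _ => C) s := by
    intro s
    set m : ℤ := ⌊s * (k:ℝ)⌋ with hm
    have hTm : MeasurableSet {y : ℝ | m = ⌊(x + r*y) * (k:ℝ)⌋} := by
      exact measurableSet_eq_fun measurable_const
        (Int.measurable_floor.comp ((measurable_id.const_mul r).const_add x |>.mul_const _))
    have heq : (fun y => S.indicator (fun p => g p.2) (y, s))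
        = fun y => ({y : ℝ | m = ⌊(x + r*y) * (k:ℝ)⌋}).indicator (fun _ => g s) y := rfl
    rw [heq, lintegral_indicator_const hTm]
    rw [Measure.restrict_apply hTm]
    by_cases hs : s ∈ Set.Ioo (x - c) (x + c)
    · rw [Set.indicator_of_mem hs]
      refine mul_le_mul_right ?_ _
      have hsub : {y : ℝ | m = ⌊(x + r*y) * (k:ℝ)⌋} ∩ Set.Icc (-1:ℝ) 1 ⊆
          Set.Ico (((m:ℝ)/k - x)/r) ((((m:ℝ)+1)/k - x)/r) := by
        rintro y ⟨hy1, _⟩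
        have := (floorIco hk0 m (x + r*y)).mpr hy1.symm
        obtain ⟨h1, h2⟩ := this
        constructor
        · rw [div_le_iff₀ hr0]; linarith
        · rw [lt_div_iff₀ hr0]; linarith
      calc volume ({y : ℝ | m = ⌊(x + r*y) * (k:ℝ)⌋} ∩ Set.Icc (-1:ℝ) 1)
          ≤ volume (Set.Ico (((m:ℝ)/k - x)/r) ((((m:ℝ)+1)/k - x)/r)) := measure_mono hsub
        _ = C := by
            rw [Real.volume_Ico, hC_def]
            congr 1
            field_simp
            ring
    · rw [Set.indicator_of_notMem hs, mul_zero]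
      have hempty : {y : ℝ | m = ⌊(x + r*y) * (k:ℝ)⌋} ∩ Set.Icc (-1:ℝ) 1 = ∅ := by
        rw [Set.eq_empty_iff_forall_notMem]
        rintro y ⟨hy1, hy2, hy3⟩
        obtain ⟨hs1, hs2⟩ := (floorIco hk0 m s).mpr hm.symm
        obtain ⟨ht1, ht2⟩ := (floorIco hk0 m (x + r*y)).mpr hy1.symm
        apply hs
        have hk1 : ((m:ℝ)+1)/k - (m:ℝ)/k = 1/k := by field_simp; ring
        constructor
        · rw [hc_def]; nlinarith [mul_le_mul_of_nonneg_left hy3 hr0.le]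
        · rw [hc_def]; nlinarith [mul_le_mul_of_nonneg_left hy2 hr0.le]
      rw [hempty]
      simp
  -- Step 4 : collapse the indicator
  have step4 : (∫⁻ s, g s * (Set.Ioo (x - c) (x + c)).indicator (fun _ => C) s)
      = C * ∫⁻ s in Set.Ioo (x - c) (x + c), g s := by
    have h1 : ∀ s, g s * (Set.Ioo (x - c) (x + c)).indicator (fun _ => C) s
        = (Set.Ioo (x - c) (x + c)).indicator (fun s' => C * g s') s := by
      intro s
      by_cases hs : s ∈ Set.Ioo (x - c) (x + c) <;> simp [hs, mul_comm]
    rw [lintegral_congr h1, lintegral_indicator measurableSet_Ioo,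
        lintegral_const_mul' _ _ ENNReal.ofReal_ne_top]
  -- Step 5 : change of variables
  have hmap : Measure.map (fun y : ℝ => x + c * y) volume = ENNReal.ofReal c⁻¹ • volume := by
    have hco : (fun y : ℝ => x + c * y) = (x + ·) ∘ (c * ·) := rfl
    rw [hco, ← Measure.map_map (measurable_const_add x) (measurable_const_mul c),
        Real.map_volume_mul_left hc.ne', Measure.map_smul]
    have h2 : Measure.map (x + ·) volume = volume := map_add_left_eq_self volume x
    rw [h2, abs_of_pos (inv_pos.mpr hc)]
  have step5 : (∫⁻ s in Set.Icc (x - c) (x + c), g s)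
      = ENNReal.ofReal c * ∫⁻ y in Set.Icc (-1:ℝ) 1, g (x + c * y) := by
    have hmeas : Measurable fun s => (Set.Icc (x-c) (x+c)).indicator g s :=
      hgm.indicator measurableSet_Icc
    have hvol_eq : (volume : Measure ℝ)
        = ENNReal.ofReal c • Measure.map (fun y : ℝ => x + c * y) volume := by
      rw [hmap, smul_smul, ← ENNReal.ofReal_mul hc.le, mul_inv_cancel₀ hc.ne',
          ENNReal.ofReal_one, one_smul]
    calc (∫⁻ s in Set.Icc (x - c) (x + c), g s)
        = ∫⁻ s, (Set.Icc (x-c) (x+c)).indicator g s ∂volume :=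
          (lintegral_indicator measurableSet_Icc g).symm
      _ = ∫⁻ s, (Set.Icc (x-c) (x+c)).indicator g s
            ∂(ENNReal.ofReal c • Measure.map (fun y : ℝ => x + c * y) volume) := by
          rw [← hvol_eq]
      _ = ENNReal.ofReal c * ∫⁻ s, (Set.Icc (x-c) (x+c)).indicator g s
            ∂(Measure.map (fun y : ℝ => x + c * y) volume) := lintegral_smul_measure _ _
      _ = ENNReal.ofReal c * ∫⁻ y, (Set.Icc (x-c) (x+c)).indicator g (x + c * y) := by
          rw [lintegral_map hmeas ((measurable_const_mul c).const_add x)]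
      _ = ENNReal.ofReal c * ∫⁻ y, (Set.Icc (-1:ℝ) 1).indicator (fun y => g (x + c * y)) y := by
          congr 1
          apply lintegral_congr
          intro y
          have hiff : x + c*y ∈ Set.Icc (x-c) (x+c) ↔ y ∈ Set.Icc (-1:ℝ) 1 := by
            simp only [Set.mem_Icc]
            constructor
            · rintro ⟨h1, h2⟩
              constructor <;> nlinarith
            · rintro ⟨h1, h2⟩
              constructor <;> nlinarith
          by_cases hy : y ∈ Set.Icc (-1:ℝ) 1
          · rw [Set.indicator_of_mem (hiff.mpr hy), Set.indicator_of_mem hy]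
          · rw [Set.indicator_of_notMem (fun h => hy (hiff.mp h)),
                Set.indicator_of_notMem hy]
      _ = ENNReal.ofReal c * ∫⁻ y in Set.Icc (-1:ℝ) 1, g (x + c * y) := by
          rw [lintegral_indicator measurableSet_Icc]
  -- Step 7 : identify the RHS
  have hqmp : Measure.QuasiMeasurePreserving (fun y : ℝ => x + c * y) volume volume :=
    ⟨(measurable_const_mul c).const_add x, by
      rw [hmap]; exact Measure.smul_absolutelyContinuous⟩
  have step7 : (∫⁻ y in Set.Icc (-1:ℝ) 1, ENNReal.ofReal |f (x + c * y) - f x|)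
      = ∫⁻ y in Set.Icc (-1:ℝ) 1, g (x + c * y) := by
    apply lintegral_congr_ae
    apply ae_restrict_of_ae
    have : (fun y => f (x + c * y)) =ᵐ[volume] fun y => F (x + c * y) := hqmp.ae_eq_comp hfF
    refine this.mono fun y hy => ?_
    have hy' : f (x + c * y) = F (x + c * y) := hy
    rw [hg_def]
    simp only [hy']
  -- constants
  have hconst : ENNReal.ofReal (k:ℝ) * C * ENNReal.ofReal c ≤ 3 := by
    rw [hC_def, ← ENNReal.ofReal_mul hk0.le, ← ENNReal.ofReal_mul (by positivity)]
    calc ENNReal.ofReal ((k:ℝ) * (1/((k:ℝ)*r)) * c) = ENNReal.ofReal (c / r) := by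
          congr 1
          field_simp
      _ ≤ ENNReal.ofReal 3 := by
          apply ENNReal.ofReal_le_ofReal
          rw [div_le_iff₀ hr0, hc_def]
          have h2 : 1/(k:ℝ) ≤ 2*r := by
            rw [div_le_iff₀ hk0]
            have h3 := (div_le_iff₀ (by positivity : (0:ℝ) < 2*k)).mp hr
            nlinarith
          linarith
      _ = 3 := by norm_num
  -- assemble
  calc (∫⁻ y in Set.Icc (-1 : ℝ) 1, ENNReal.ofReal |Ek k f (x + r * y) - f x|)
      ≤ ∫⁻ y in Set.Icc (-1:ℝ) 1,
          ENNReal.ofReal (k:ℝ) * ∫⁻ s, S.indicator (fun p => g p.2) (y, s) :=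
        lintegral_mono step1
    _ = ENNReal.ofReal (k:ℝ) * ∫⁻ y in Set.Icc (-1:ℝ) 1,
          ∫⁻ s, S.indicator (fun p => g p.2) (y, s) :=
        lintegral_const_mul' _ _ ENNReal.ofReal_ne_top
    _ = ENNReal.ofReal (k:ℝ) * ∫⁻ s, ∫⁻ y in Set.Icc (-1:ℝ) 1,
          S.indicator (fun p => g p.2) (y, s) := by rw [hswap]
    _ ≤ ENNReal.ofReal (k:ℝ) * ∫⁻ s,
          g s * (Set.Ioo (x - c) (x + c)).indicator (fun _ => C) s :=
        mul_le_mul_right (lintegral_mono step3) _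
    _ = ENNReal.ofReal (k:ℝ) * (C * ∫⁻ s in Set.Ioo (x - c) (x + c), g s) := by rw [step4]
    _ ≤ ENNReal.ofReal (k:ℝ) * (C * ∫⁻ s in Set.Icc (x - c) (x + c), g s) := by
        refine mul_le_mul_right (mul_le_mul_right ?_ _) _
        exact lintegral_mono_set Set.Ioo_subset_Icc_self
    _ = ENNReal.ofReal (k:ℝ) * C * ENNReal.ofReal c
          * ∫⁻ y in Set.Icc (-1:ℝ) 1, g (x + c * y) := by rw [step5]; ring
    _ ≤ 3 * ∫⁻ y in Set.Icc (-1:ℝ) 1, g (x + c * y) := mul_le_mul_left hconst _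
    _ = 3 * ∫⁻ y in Set.Icc (-1 : ℝ) 1,
          ENNReal.ofReal |f (x + (r + 1 / (k : ℝ)) * y) - f x| := by rw [← hc_def, step7]
end
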